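/- arXiv:1110.1171 — 3 statements merged into one kernel-verified Lean document; each statement's English description precedes it below -/
import Mathlib

section
/- Let c, d > 2 and n = c + d. With I as in the previous statement and J = I + (T_∞), the ideal I is radical: √I = I. -/
open MvPolynomial

/-- Index set for the Plücker variables `T_{ij}`, `i < j` (0-indexed: `1 ≤ i` becomes `0 ≤ i`,
`j ≤ n` becomes `j.val < n`). -/
abbrev PIdx (n : ℕ) := {p : Fin n × Fin n // p.1 < p.2}

/-- Index set for the variables `T_{ij}` together with the extra variable `T_∞`. -/
abbrev Idx (n : ℕ) := PIdx n ⊕ Unit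

/-- The variable `T_{ij}`. -/
noncomputable def W {n : ℕ} (i j : Fin n) (h : i < j) : MvPolynomial (Idx n) ℂ :=
  X (Sum.inl ⟨(i, j), h⟩)

/-- The variable `T_∞`. -/
noncomputable def Tinf {n : ℕ} : MvPolynomial (Idx n) ℂ := X (Sum.inr ())

/-- Generators of the ideal `I`: `T_∞T_{ij}T_{kl} - T_{ik}T_{jl} + T_{il}T_{jk}` for
quadruples `i < j ≤ c < k < l` (1-indexed; `j ≤ c` is `j.val < c` and `c + 1 ≤ k` is
`c ≤ k.val` in 0-indexed terms), and the Plücker trinomials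
`T_{ij}T_{kl} - T_{ik}T_{jl} + T_{il}T_{jk}` for all other quadruples `i < j < k < l`. -/
def IGens (c n : ℕ) : Set (MvPolynomial (Idx n) ℂ) :=
  {P | ∃ (i j k l : Fin n) (hij : i < j) (hjk : j < k) (hkl : k < l),
    ((j.val < c ∧ c ≤ k.val) ∧
      P = Tinf * W i j hij * W k l hkl - W i k (hij.trans hjk) * W j l (hjk.trans hkl)
            + W i l (hij.trans (hjk.trans hkl)) * W j k hjk) ∨
    (¬(j.val < c ∧ c ≤ k.val) ∧
      P = W i j hij * W k l hkl - W i k (hij.trans hjk) * W j l (hjk.trans hkl)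
            + W i l (hij.trans (hjk.trans hkl)) * W j k hjk)}

/-- Generators of the ideal `J = I + (T_∞)`: the variable `T_∞`, the binomials
`-T_{ik}T_{jl} + T_{il}T_{jk}` for quadruples `i < j ≤ c < k < l`, and the Plücker
trinomials for all other quadruples `i < j < k < l`. -/
def JGens (c n : ℕ) : Set (MvPolynomial (Idx n) ℂ) :=
  insert Tinf
    {P | ∃ (i j k l : Fin n) (hij : i < j) (hjk : j < k) (hkl : k < l),
      ((j.val < c ∧ c ≤ k.val) ∧
        P = - W i k (hij.trans hjk) * W j l (hjk.trans hkl)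
              + W i l (hij.trans (hjk.trans hkl)) * W j k hjk) ∨
      (¬(j.val < c ∧ c ≤ k.val) ∧
        P = W i j hij * W k l hkl - W i k (hij.trans hjk) * W j l (hjk.trans hkl)
              + W i l (hij.trans (hjk.trans hkl)) * W j k hjk)}

open AddMonoidAlgebra

namespace Stmt10

/-- target variables: class 0 = x1, 1 = b, 2 = s, 3 = eps, 4 = x2, 5 = z1, 6 = z2 -/
abbrev Vr (n : ℕ) := Lex (Fin 7 × Fin (n+1))

variable {n : ℕ}

def vx1 (i : Fin n) : Vr n := toLex (0, i.castSucc)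
def vb  (i : Fin n) : Vr n := toLex (1, i.castSucc)
def vs  : Vr n := toLex (2, 0)
def veps : Vr n := toLex (3, 0)
def vx2 (i : Fin n) : Vr n := toLex (4, i.castSucc)
def vz1 (i : Fin n) : Vr n := toLex (5, i.castSucc)
def vz2 (i : Fin n) : Vr n := toLex (6, i.castSucc)

noncomputable def img (c : ℕ) : Idx n → MvPolynomial (Vr n) ℂ
  | .inr _ => X veps * X vs * X vs
  | .inl p =>
    let i := p.1.1; let j := p.1.2
    if j.val < c then X (vx1 i) * X (vx2 j) - X (vx1 j) * X (vx2 i)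
    else if c ≤ i.val then
      X (vb i) * X (vz2 j) - X (vb j) * X (vz2 i)
        + X veps * (X (vz1 i) * X (vz2 j) - X (vz1 j) * X (vz2 i))
    else
      - (X vs * X (vx2 i) * X (vb j))
        + X veps * X vs * (X (vx1 i) * X (vz2 j) - X (vx2 i) * X (vz1 j))

lemma img_gen_zero (c : ℕ) {P : MvPolynomial (Idx n) ℂ} (hP : P ∈ IGens c n) :
    aeval (img c) P = 0 := by
  obtain ⟨i, j, k, l, hij, hjk, hkl, H⟩ := hP
  have hik := hij.trans hjk
  have hjl := hjk.trans hkl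
  have hil := hij.trans hjl
  rcases H with ⟨⟨h1, h2⟩, rfl⟩ | ⟨h0, rfl⟩ <;>
  · simp only [W, Tinf, map_add, map_sub, map_mul, aeval_X, img]
    split_ifs <;> first | (exfalso; omega) | ring

variable {n : ℕ}

def msq : Idx n → ℕ
  | .inl p => (p.1.2.val - p.1.1.val) ^ 2
  | .inr _ => 0

def mw (m : Idx n →₀ ℕ) : ℕ := m.sum fun v e => e * msq v

def Nested : Idx n → Idx n → Prop
  | .inl p, .inl q => p.1.1 < q.1.1 ∧ q.1.2 < p.1.2
  | _, _ => False

def Std (m : Idx n →₀ ℕ) : Prop := ∀ v ∈ m.support, ∀ w ∈ m.support, ¬ Nested v w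

noncomputable def NN (c n : ℕ) : Submodule ℂ (MvPolynomial (Idx n) ℂ) :=
  (Ideal.span (IGens c n)).restrictScalars ℂ ⊔
    Submodule.span ℂ (Set.range fun m : {m : Idx n →₀ ℕ // Std m} =>
      (monomial m.1 1 : MvPolynomial (Idx n) ℂ))

lemma mw_add (m₁ m₂ : Idx n →₀ ℕ) : mw (m₁ + m₂) = mw m₁ + mw m₂ :=
  Finsupp.sum_add_index' (fun v => zero_mul _) (fun v e₁ e₂ => add_mul e₁ e₂ _)

lemma mw_single (v : Idx n) (e : ℕ) : mw (Finsupp.single v e) = e * msq v :=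
  Finsupp.sum_single_index (zero_mul _)

lemma key_ineq1 {A B E F : ℕ} (h1 : A < B) (h2 : B < E) (h3 : E < F) :
    (E - A) ^ 2 + (F - B) ^ 2 < (F - A) ^ 2 + (E - B) ^ 2 := by
  obtain ⟨u, rfl⟩ : ∃ u, B = A + u + 1 := ⟨B - A - 1, by omega⟩
  obtain ⟨v, rfl⟩ : ∃ v, E = A + u + 1 + v + 1 := ⟨E - (A + u + 1) - 1, by omega⟩
  obtain ⟨w, rfl⟩ : ∃ w, F = A + u + 1 + v + 1 + w + 1 := ⟨F - (A + u + 1 + v + 1) - 1, by omega⟩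
  have e1 : A + u + 1 + v + 1 - A = u + v + 2 := by omega
  have e2 : A + u + 1 + v + 1 + w + 1 - (A + u + 1) = v + w + 2 := by omega
  have e3 : A + u + 1 + v + 1 + w + 1 - A = u + v + w + 3 := by omega
  have e4 : A + u + 1 + v + 1 - (A + u + 1) = v + 1 := by omega
  rw [e1, e2, e3, e4]
  nlinarith [sq_nonneg (u + v + w)]

lemma key_ineq2 {A B E F : ℕ} (h1 : A < B) (h2 : B < E) (h3 : E < F) :
    (B - A) ^ 2 + (F - E) ^ 2 < (F - A) ^ 2 + (E - B) ^ 2 := by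
  obtain ⟨u, rfl⟩ : ∃ u, B = A + u + 1 := ⟨B - A - 1, by omega⟩
  obtain ⟨v, rfl⟩ : ∃ v, E = A + u + 1 + v + 1 := ⟨E - (A + u + 1) - 1, by omega⟩
  obtain ⟨w, rfl⟩ : ∃ w, F = A + u + 1 + v + 1 + w + 1 := ⟨F - (A + u + 1 + v + 1) - 1, by omega⟩
  have e1 : A + u + 1 - A = u + 1 := by omega
  have e2 : A + u + 1 + v + 1 + w + 1 - (A + u + 1 + v + 1) = w + 1 := by omega
  have e3 : A + u + 1 + v + 1 + w + 1 - A = u + v + w + 3 := by omega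
  have e4 : A + u + 1 + v + 1 - (A + u + 1) = v + 1 := by omega
  rw [e1, e2, e3, e4]
  nlinarith [sq_nonneg (u + v + w)]

lemma monomial_mem (c : ℕ) (m : Idx n →₀ ℕ) :
    (monomial m 1 : MvPolynomial (Idx n) ℂ) ∈ NN c n := by
  generalize hk : mw m = k
  induction k using Nat.strong_induction_on generalizing m with
  | _ k IH =>
  by_cases hstd : Std m
  · exact Submodule.mem_sup_right (Submodule.subset_span ⟨⟨m, hstd⟩, rfl⟩)
  · simp only [Std, not_forall] at hstd
    obtain ⟨v, hv, w, hw, hnest⟩ := hstd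
    rcases v with ⟨⟨a, f⟩, haf⟩ | u
    swap
    · cases w <;> simp [Nested] at hnest
    rcases w with ⟨⟨b, e⟩, hbe⟩ | u
    swap
    · simp [Nested] at hnest
    simp only [Nested, not_not] at hnest
    obtain ⟨hab, hef⟩ := hnest
    have hbe' : b < e := hbe
    have hae : a < e := hab.trans hbe'
    have hbf : b < f := hbe'.trans hef
    have hvw : (Sum.inl ⟨(a, f), haf⟩ : Idx n) ≠ Sum.inl ⟨(b, e), hbe⟩ := by
      intro h
      apply hab.ne
      exact congrArg (fun x : Idx n => match x with | .inl p => p.1.1 | .inr _ => a) h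
    have hmv : 1 ≤ m (Sum.inl ⟨(a, f), haf⟩) :=
      Nat.one_le_iff_ne_zero.mpr (Finsupp.mem_support_iff.mp hv)
    have hmw : 1 ≤ m (Sum.inl ⟨(b, e), hbe⟩) :=
      Nat.one_le_iff_ne_zero.mpr (Finsupp.mem_support_iff.mp hw)
    set m' : Idx n →₀ ℕ :=
      m - Finsupp.single (Sum.inl ⟨(a, f), haf⟩ : Idx n) 1
        - Finsupp.single (Sum.inl ⟨(b, e), hbe⟩ : Idx n) 1 with hm'def
    have hle1 : Finsupp.single (Sum.inl ⟨(b, e), hbe⟩ : Idx n) 1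
        ≤ m - Finsupp.single (Sum.inl ⟨(a, f), haf⟩ : Idx n) 1 := by
      rw [Finsupp.single_le_iff, Finsupp.tsub_apply, Finsupp.single_apply,
        if_neg hvw]
      omega
    have hle2 : Finsupp.single (Sum.inl ⟨(a, f), haf⟩ : Idx n) 1 ≤ m := by
      rw [Finsupp.single_le_iff]; exact hmv
    have hm : m = m' + Finsupp.single (Sum.inl ⟨(a, f), haf⟩ : Idx n) 1
        + Finsupp.single (Sum.inl ⟨(b, e), hbe⟩ : Idx n) 1 := by
      rw [hm'def, add_right_comm, tsub_add_cancel_of_le hle1,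
        tsub_add_cancel_of_le hle2]
    have hmono1 : ∀ (v₁ v₂ : Idx n), (monomial m' 1 * (X v₁ * X v₂) : MvPolynomial (Idx n) ℂ)
        = monomial (m' + Finsupp.single v₁ 1 + Finsupp.single v₂ 1) 1 := by
      intro v₁ v₂
      simp only [X, monomial_mul, mul_one]
      rw [add_assoc]
    have hmono2 : ∀ (v₁ v₂ : Idx n),
        (monomial m' 1 * (Tinf * X v₁ * X v₂) : MvPolynomial (Idx n) ℂ)
        = monomial (m' + Finsupp.single v₁ 1 + Finsupp.single v₂ 1
            + Finsupp.single (Sum.inr () : Idx n) 1) 1 := by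
      intro v₁ v₂
      simp only [Tinf, X, monomial_mul, mul_one]
      congr 1
      abel
    have hmono : (monomial m 1 : MvPolynomial (Idx n) ℂ)
        = monomial m' 1 * (X (Sum.inl ⟨(a, f), haf⟩ : Idx n)
            * X (Sum.inl ⟨(b, e), hbe⟩ : Idx n)) := by
      rw [hmono1, ← hm]
    have hmem1 : (monomial (m' + Finsupp.single (Sum.inl ⟨(a, e), hae⟩ : Idx n) 1
        + Finsupp.single (Sum.inl ⟨(b, f), hbf⟩ : Idx n) 1) 1 :
        MvPolynomial (Idx n) ℂ) ∈ NN c n := by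
      apply IH _ _ _ rfl
      rw [← hk, hm]
      simp only [mw_add, mw_single, one_mul, msq]
      have := key_ineq1 (A := a.val) (B := b.val) (E := e.val) (F := f.val) hab hbe' hef
      omega
    have hmem2t : (monomial (m' + Finsupp.single (Sum.inl ⟨(a, b), hab⟩ : Idx n) 1
        + Finsupp.single (Sum.inl ⟨(e, f), hef⟩ : Idx n) 1
        + Finsupp.single (Sum.inr () : Idx n) 1) 1 :
        MvPolynomial (Idx n) ℂ) ∈ NN c n := by
      apply IH _ _ _ rfl
      rw [← hk, hm]
      simp only [mw_add, mw_single, one_mul, msq]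
      have := key_ineq2 (A := a.val) (B := b.val) (E := e.val) (F := f.val) hab hbe' hef
      omega
    have hmem2 : (monomial (m' + Finsupp.single (Sum.inl ⟨(a, b), hab⟩ : Idx n) 1
        + Finsupp.single (Sum.inl ⟨(e, f), hef⟩ : Idx n) 1) 1 :
        MvPolynomial (Idx n) ℂ) ∈ NN c n := by
      apply IH _ _ _ rfl
      rw [← hk, hm]
      simp only [mw_add, mw_single, one_mul, msq]
      have := key_ineq2 (A := a.val) (B := b.val) (E := e.val) (F := f.val) hab hbe' hef
      omega
    by_cases hstr : b.val < c ∧ c ≤ e.val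
    · have hGmem : (Tinf * W a b hab * W e f hef - W a e hae * W b f hbf
          + W a f haf * W b e hbe' : MvPolynomial (Idx n) ℂ) ∈ IGens c n :=
        ⟨a, b, e, f, hab, hbe', hef, Or.inl ⟨hstr, rfl⟩⟩
      have hsplit : (monomial m 1 : MvPolynomial (Idx n) ℂ)
          = monomial m' 1 * (Tinf * W a b hab * W e f hef - W a e hae * W b f hbf
              + W a f haf * W b e hbe')
            + monomial m' 1 * (X (Sum.inl ⟨(a, e), hae⟩ : Idx n)
                * X (Sum.inl ⟨(b, f), hbf⟩ : Idx n))
            - monomial m' 1 * (Tinf * X (Sum.inl ⟨(a, b), hab⟩ : Idx n)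
                * X (Sum.inl ⟨(e, f), hef⟩ : Idx n)) := by
        rw [hmono]
        simp only [W]
        ring
      rw [hsplit]
      refine sub_mem (add_mem ?_ ?_) ?_
      · exact Submodule.mem_sup_left (Ideal.mul_mem_left _ _ (Ideal.subset_span hGmem))
      · rw [hmono1]; exact hmem1
      · rw [hmono2]; exact hmem2t
    · have hGmem : (W a b hab * W e f hef - W a e hae * W b f hbf
          + W a f haf * W b e hbe' : MvPolynomial (Idx n) ℂ) ∈ IGens c n :=
        ⟨a, b, e, f, hab, hbe', hef, Or.inr ⟨hstr, rfl⟩⟩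
      have hsplit : (monomial m 1 : MvPolynomial (Idx n) ℂ)
          = monomial m' 1 * (W a b hab * W e f hef - W a e hae * W b f hbf
              + W a f haf * W b e hbe')
            + monomial m' 1 * (X (Sum.inl ⟨(a, e), hae⟩ : Idx n)
                * X (Sum.inl ⟨(b, f), hbf⟩ : Idx n))
            - monomial m' 1 * (X (Sum.inl ⟨(a, b), hab⟩ : Idx n)
                * X (Sum.inl ⟨(e, f), hef⟩ : Idx n)) := by
        rw [hmono]
        simp only [W]
        ring
      rw [hsplit]
      refine sub_mem (add_mem ?_ ?_) ?_
      · exact Submodule.mem_sup_left (Ideal.mul_mem_left _ _ (Ideal.subset_span hGmem))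
      · rw [hmono1]; exact hmem1
      · rw [hmono1]; exact hmem2

lemma all_mem (c : ℕ) (f : MvPolynomial (Idx n) ℂ) : f ∈ NN c n := by
  rw [← support_sum_monomial_coeff f]
  refine Submodule.sum_mem _ fun v hv => ?_
  have : (monomial v (coeff v f) : MvPolynomial (Idx n) ℂ)
      = (coeff v f) • monomial v 1 := by
    rw [smul_monomial, smul_eq_mul, mul_one]
  rw [this]
  exact Submodule.smul_mem _ _ (monomial_mem c v)


noncomputable def MO (n : ℕ) : MonomialOrder (Vr n) := MonomialOrder.lex

noncomputable def DD (n : ℕ) : (Vr n →₀ ℕ) → (MO n).syn := ⇑(MO n).toSyn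

lemma DD_inj : Function.Injective (DD n) := (MO n).toSyn.injective
lemma DD_add (a b : Vr n →₀ ℕ) : DD n (a + b) = DD n a + DD n b := map_add _ _ _
lemma DD_add' : ∀ (a b : Vr n →₀ ℕ), DD n (a + b) = DD n a + DD n b := DD_add
lemma DD_zero : DD n 0 = 0 := map_zero _

/-- the leading exponent of the image of each variable -/
noncomputable def lexp (c : ℕ) : Idx n → (Vr n →₀ ℕ)
  | .inr _ => Finsupp.single veps 1 + Finsupp.single vs 2
  | .inl p =>
    if p.1.2.val < c then
      Finsupp.single (vx1 p.1.1) 1 + Finsupp.single (vx2 p.1.2) 1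
    else if c ≤ p.1.1.val then
      Finsupp.single (vb p.1.1) 1 + Finsupp.single (vz2 p.1.2) 1
    else
      Finsupp.single veps 1 + Finsupp.single vs 1 + Finsupp.single (vx1 p.1.1) 1
        + Finsupp.single (vz2 p.1.2) 1

lemma lex_lt_of {e1 e2 : Vr n →₀ ℕ} (u0 : Vr n) (h : e1 u0 < e2 u0)
    (hs : ∀ u, u < u0 → e1 u = e2 u) : DD n e1 < DD n e2 := by
  rw [DD, MO, MonomialOrder.lex_lt_iff, Finsupp.Lex.lt_iff]
  exact ⟨u0, hs, h⟩

/-- if `e2` is supported on variables `> u0` and `u0` is in the support of `e1`,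
with `e1` supported on variables `≥ u0`, then `e2 < e1`. -/
lemma lex_lt_of_support {e1 e2 : Vr n →₀ ℕ} (u0 : Vr n) (h1 : e1 u0 ≠ 0)
    (h2 : ∀ u ∈ e2.support, u0 < u) (h3 : ∀ u ∈ e1.support, u0 ≤ u) :
    DD n e2 < DD n e1 := by
  apply lex_lt_of u0
  · have : e2 u0 = 0 := by
      by_contra h
      exact absurd (h2 u0 (Finsupp.mem_support_iff.mpr h)) (lt_irrefl _)
    rw [this]
    exact Nat.pos_of_ne_zero h1
  · intro u hu
    have hu1 : e2 u = 0 := by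
      by_contra h
      exact absurd (hu.trans (h2 u (Finsupp.mem_support_iff.mpr h))) (lt_irrefl _)
    have hu2 : e1 u = 0 := by
      by_contra h
      exact absurd (hu.trans_le (h3 u (Finsupp.mem_support_iff.mpr h))) (lt_irrefl _)
    rw [hu1, hu2]

lemma vr_lt_iff (a b : Fin 7) (i j : Fin (n+1)) :
    (toLex (a, i) : Vr n) < toLex (b, j) ↔ a < b ∨ a = b ∧ i < j := Prod.Lex.lt_iff



lemma mem2 {u a b : Vr n} {k1 k2 : ℕ}
    (hu : u ∈ (Finsupp.single a k1 + Finsupp.single b k2).support) : u = a ∨ u = b := by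
  by_contra h
  push_neg at h
  rw [Finsupp.mem_support_iff, Finsupp.add_apply, Finsupp.single_apply, Finsupp.single_apply,
    if_neg (fun hh => h.1 hh.symm), if_neg (fun hh => h.2 hh.symm)] at hu
  exact hu rfl

lemma mem3 {u a b c : Vr n} {k1 k2 k3 : ℕ}
    (hu : u ∈ (Finsupp.single a k1 + Finsupp.single b k2 + Finsupp.single c k3).support) :
    u = a ∨ u = b ∨ u = c := by
  by_contra h
  push_neg at h
  rw [Finsupp.mem_support_iff, Finsupp.add_apply, Finsupp.add_apply, Finsupp.single_apply,
    Finsupp.single_apply, Finsupp.single_apply, if_neg (fun hh => h.1 hh.symm),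
    if_neg (fun hh => h.2.1 hh.symm), if_neg (fun hh => h.2.2 hh.symm)] at hu
  exact hu rfl

lemma mem4 {u a b c d : Vr n} {k1 k2 k3 k4 : ℕ}
    (hu : u ∈ (Finsupp.single a k1 + Finsupp.single b k2 + Finsupp.single c k3
      + Finsupp.single d k4).support) :
    u = a ∨ u = b ∨ u = c ∨ u = d := by
  by_contra h
  push_neg at h
  rw [Finsupp.mem_support_iff, Finsupp.add_apply, Finsupp.add_apply, Finsupp.add_apply,
    Finsupp.single_apply, Finsupp.single_apply, Finsupp.single_apply, Finsupp.single_apply,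
    if_neg (fun hh => h.1 hh.symm), if_neg (fun hh => h.2.1 hh.symm),
    if_neg (fun hh => h.2.2.1 hh.symm), if_neg (fun hh => h.2.2.2 hh.symm)] at hu
  exact hu rfl

lemma cls_lt {a b : Fin 7} (h : a < b) (i j : Fin (n+1)) :
    (toLex (a, i) : Vr n) < toLex (b, j) := (vr_lt_iff a b i j).mpr (Or.inl h)

lemma idx_lt {a : Fin 7} {i j : Fin (n+1)} (h : i < j) :
    (toLex (a, i) : Vr n) < toLex (a, j) := (vr_lt_iff a a i j).mpr (Or.inr ⟨rfl, h⟩)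

lemma vx1_lt_vx1 {i j : Fin n} (h : i < j) : vx1 i < vx1 j :=
  idx_lt (by exact_mod_cast h)
lemma vb_lt_vb {i j : Fin n} (h : i < j) : vb i < vb j :=
  idx_lt (by exact_mod_cast h)
lemma vx1_lt_vb (i j : Fin n) : vx1 i < vb j := cls_lt (by decide) _ _
lemma vx1_lt_vs (i : Fin n) : vx1 i < (vs : Vr n) := cls_lt (by decide) _ _
lemma vx1_lt_veps (i : Fin n) : vx1 i < (veps : Vr n) := cls_lt (by decide) _ _
lemma vx1_lt_vx2 (i j : Fin n) : vx1 i < vx2 j := cls_lt (by decide) _ _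
lemma vx1_lt_vz1 (i j : Fin n) : vx1 i < vz1 j := cls_lt (by decide) _ _
lemma vx1_lt_vz2 (i j : Fin n) : vx1 i < vz2 j := cls_lt (by decide) _ _
lemma vb_lt_vs (i : Fin n) : vb i < (vs : Vr n) := cls_lt (by decide) _ _
lemma vb_lt_veps (i : Fin n) : vb i < (veps : Vr n) := cls_lt (by decide) _ _
lemma vb_lt_vx2 (i j : Fin n) : vb i < vx2 j := cls_lt (by decide) _ _
lemma vb_lt_vz1 (i j : Fin n) : vb i < vz1 j := cls_lt (by decide) _ _
lemma vb_lt_vz2 (i j : Fin n) : vb i < vz2 j := cls_lt (by decide) _ _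

lemma XX (a b : Vr n) : (X a * X b : MvPolynomial (Vr n) ℂ)
    = monomial (Finsupp.single a 1 + Finsupp.single b 1) 1 := by
  rw [X, X, monomial_mul, one_mul]

lemma XXX (a b c : Vr n) : (X a * X b * X c : MvPolynomial (Vr n) ℂ)
    = monomial (Finsupp.single a 1 + Finsupp.single b 1 + Finsupp.single c 1) 1 := by
  rw [XX, X, monomial_mul, one_mul]

lemma XXXX (a b c d : Vr n) : (X a * X b * X c * X d : MvPolynomial (Vr n) ℂ)
    = monomial (Finsupp.single a 1 + Finsupp.single b 1 + Finsupp.single c 1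
        + Finsupp.single d 1) 1 := by
  rw [XXX, X, monomial_mul, one_mul]

lemma monomial_eq_single (e : Vr n →₀ ℕ) (r : ℂ) :
    (monomial e r : MvPolynomial (Vr n) ℂ) = AddMonoidAlgebra.single e r := rfl

lemma supDeg_monomial (e : Vr n →₀ ℕ) {r : ℂ} (hr : r ≠ 0) :
    supDegree (DD n) (monomial e r : MvPolynomial (Vr n) ℂ) = (MO n).toSyn e := by
  rw [monomial_eq_single]
  exact supDegree_single_ne_zero _ hr

lemma monic_head {E1 : Vr n →₀ ℕ} {q : MvPolynomial (Vr n) ℂ}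
    (h : supDegree (DD n) q < (MO n).toSyn E1) :
    Monic (DD n) (monomial E1 1 + q : MvPolynomial (Vr n) ℂ) ∧
      supDegree (DD n) (monomial E1 1 + q : MvPolynomial (Vr n) ℂ) = (MO n).toSyn E1 := by
  have hs : supDegree (DD n) (monomial E1 (1:ℂ) : MvPolynomial (Vr n) ℂ)
      = (MO n).toSyn E1 := supDeg_monomial E1 one_ne_zero
  have h' : supDegree (DD n) q
      < supDegree (DD n) (monomial E1 (1:ℂ) : MvPolynomial (Vr n) ℂ) := by rw [hs]; exact h
  constructor
  · show leadingCoeff _ _ = 1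
    rw [leadingCoeff_add_eq_left h', monomial_eq_single, leadingCoeff_single DD_inj]
  · rw [supDegree_add_eq_left h', hs]

lemma monomial_negone (e : Vr n →₀ ℕ) :
    (monomial e (-1 : ℂ) : MvPolynomial (Vr n) ℂ) = - monomial e 1 :=
  map_neg (monomial e) 1

lemma supDeg_add_lt {p q : MvPolynomial (Vr n) ℂ} {b : (MO n).syn}
    (hp : supDegree (DD n) p < b) (hq : supDegree (DD n) q < b) :
    supDegree (DD n) (p + q) < b :=
  lt_of_le_of_lt supDegree_add_le (sup_lt_iff.mpr ⟨hp, hq⟩)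

lemma supDeg_mono_lt {e E : Vr n →₀ ℕ} {r : ℂ} (hr : r ≠ 0)
    (h : DD n e < (MO n).toSyn E) :
    supDegree (DD n) (monomial e r : MvPolynomial (Vr n) ℂ) < (MO n).toSyn E := by
  rw [supDeg_monomial e hr]; exact h

lemma img_monic (c : ℕ) (v : Idx n) :
    Monic (DD n) (img c v) ∧ supDegree (DD n) (img c v) = (MO n).toSyn (lexp c v) := by
  obtain ⟨⟨i, j⟩, hij⟩ | u := v
  · by_cases h1 : j.val < c
    · -- block-1 variable
      have himg : img c (Sum.inl ⟨(i, j), hij⟩)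
          = monomial (Finsupp.single (vx1 i) 1 + Finsupp.single (vx2 j) 1) 1
            + monomial (Finsupp.single (vx1 j) 1 + Finsupp.single (vx2 i) 1) (-1) := by
        simp only [img, if_pos h1]
        rw [XX, XX, monomial_negone]
        ring
      have hlexp : lexp c (Sum.inl ⟨(i, j), hij⟩)
          = Finsupp.single (vx1 i) 1 + Finsupp.single (vx2 j) 1 := by
        simp only [lexp, if_pos h1]
      rw [himg, hlexp]
      apply monic_head
      rw [supDeg_monomial _ (neg_ne_zero.mpr one_ne_zero)]
      apply lex_lt_of_support (vx1 i)
      · rw [Finsupp.add_apply, Finsupp.single_eq_same,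
          Finsupp.single_eq_of_ne' (vx1_lt_vx2 i j).ne']
        simp
      · intro u hu
        rcases mem2 hu with rfl | rfl
        · exact vx1_lt_vx1 hij
        · exact vx1_lt_vx2 _ _
      · intro u hu
        rcases mem2 hu with rfl | rfl
        · exact le_refl _
        · exact (vx1_lt_vx2 _ _).le
    · by_cases h2 : c ≤ i.val
      · -- block-2 variable
        have himg : img c (Sum.inl ⟨(i, j), hij⟩)
            = monomial (Finsupp.single (vb i) 1 + Finsupp.single (vz2 j) 1) 1
              + (monomial (Finsupp.single (vb j) 1 + Finsupp.single (vz2 i) 1) (-1)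
                + monomial (Finsupp.single veps 1 + Finsupp.single (vz1 i) 1
                    + Finsupp.single (vz2 j) 1) 1
                + monomial (Finsupp.single veps 1 + Finsupp.single (vz1 j) 1
                    + Finsupp.single (vz2 i) 1) (-1)) := by
          simp only [img, if_neg h1, if_pos h2]
          rw [monomial_negone, monomial_negone, ← XX, ← XX, ← XXX, ← XXX]
          ring
        have hlexp : lexp c (Sum.inl ⟨(i, j), hij⟩)
            = Finsupp.single (vb i) 1 + Finsupp.single (vz2 j) 1 := by
          simp only [lexp, if_neg h1, if_pos h2]
        rw [himg, hlexp]
        apply monic_head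
        have hb1 : ∀ u ∈ (Finsupp.single (vb i) (1:ℕ)
            + Finsupp.single (vz2 j) 1).support, vb i ≤ u := by
          intro u hu
          rcases mem2 hu with rfl | rfl
          · exact le_refl _
          · exact (vb_lt_vz2 _ _).le
        have hne : ((Finsupp.single (vb i) 1 + Finsupp.single (vz2 j) 1 : Vr n →₀ ℕ))
            (vb i) ≠ 0 := by
          rw [Finsupp.add_apply, Finsupp.single_eq_same,
            Finsupp.single_eq_of_ne' (vb_lt_vz2 i j).ne']
          simp
        have k2 : DD n (Finsupp.single (vb j) 1 + Finsupp.single (vz2 i) 1)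
            < DD n (Finsupp.single (vb i) 1 + Finsupp.single (vz2 j) 1) := by
          apply lex_lt_of_support (vb i) hne _ hb1
          intro u hu
          rcases mem2 hu with rfl | rfl
          · exact vb_lt_vb hij
          · exact vb_lt_vz2 _ _
        have k3 : DD n (Finsupp.single veps 1 + Finsupp.single (vz1 i) 1
            + Finsupp.single (vz2 j) 1) < DD n (Finsupp.single (vb i) 1
              + Finsupp.single (vz2 j) 1) := by
          apply lex_lt_of_support (vb i) hne _ hb1
          intro u hu
          rcases mem3 hu with rfl | rfl | rfl
          · exact vb_lt_veps _
          · exact vb_lt_vz1 _ _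
          · exact vb_lt_vz2 _ _
        have k4 : DD n (Finsupp.single veps 1 + Finsupp.single (vz1 j) 1
            + Finsupp.single (vz2 i) 1) < DD n (Finsupp.single (vb i) 1
              + Finsupp.single (vz2 j) 1) := by
          apply lex_lt_of_support (vb i) hne _ hb1
          intro u hu
          rcases mem3 hu with rfl | rfl | rfl
          · exact vb_lt_veps _
          · exact vb_lt_vz1 _ _
          · exact vb_lt_vz2 _ _
        exact supDeg_add_lt (supDeg_add_lt
          (supDeg_mono_lt (neg_ne_zero.mpr one_ne_zero) k2)
          (supDeg_mono_lt one_ne_zero k3))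
          (supDeg_mono_lt (neg_ne_zero.mpr one_ne_zero) k4)
      · -- straddling variable
        have himg : img c (Sum.inl ⟨(i, j), hij⟩)
            = monomial (Finsupp.single veps 1 + Finsupp.single vs 1
                + Finsupp.single (vx1 i) 1 + Finsupp.single (vz2 j) 1) 1
              + (monomial (Finsupp.single vs 1 + Finsupp.single (vx2 i) 1
                    + Finsupp.single (vb j) 1) (-1)
                + monomial (Finsupp.single veps 1 + Finsupp.single vs 1
                    + Finsupp.single (vx2 i) 1 + Finsupp.single (vz1 j) 1) (-1)) := by
          simp only [img, if_neg h1, if_neg h2]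
          rw [monomial_negone, monomial_negone, ← XXX, ← XXXX, ← XXXX]
          ring
        have hlexp : lexp c (Sum.inl ⟨(i, j), hij⟩)
            = Finsupp.single veps 1 + Finsupp.single vs 1 + Finsupp.single (vx1 i) 1
              + Finsupp.single (vz2 j) 1 := by
          simp only [lexp, if_neg h1, if_neg h2]
        rw [himg, hlexp]
        apply monic_head
        have hb1 : ∀ u ∈ (Finsupp.single veps 1 + Finsupp.single vs 1
            + Finsupp.single (vx1 i) (1:ℕ) + Finsupp.single (vz2 j) 1).support,
            vx1 i ≤ u := by
          intro u hu
          rcases mem4 hu with rfl | rfl | rfl | rfl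
          · exact (vx1_lt_veps _).le
          · exact (vx1_lt_vs _).le
          · exact le_refl _
          · exact (vx1_lt_vz2 _ _).le
        have hne : ((Finsupp.single veps 1 + Finsupp.single vs 1
            + Finsupp.single (vx1 i) 1 + Finsupp.single (vz2 j) 1 : Vr n →₀ ℕ))
            (vx1 i) ≠ 0 := by
          rw [Finsupp.add_apply, Finsupp.add_apply, Finsupp.add_apply,
            Finsupp.single_eq_same,
            Finsupp.single_eq_of_ne' (vx1_lt_veps i).ne',
            Finsupp.single_eq_of_ne' (vx1_lt_vs i).ne',
            Finsupp.single_eq_of_ne' (vx1_lt_vz2 i j).ne']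
          simp
        have k2 : DD n (Finsupp.single vs 1 + Finsupp.single (vx2 i) 1
            + Finsupp.single (vb j) 1) < DD n (Finsupp.single veps 1 + Finsupp.single vs 1
              + Finsupp.single (vx1 i) 1 + Finsupp.single (vz2 j) 1) := by
          apply lex_lt_of_support (vx1 i) hne _ hb1
          intro u hu
          rcases mem3 hu with rfl | rfl | rfl
          · exact vx1_lt_vs _
          · exact vx1_lt_vx2 _ _
          · exact vx1_lt_vb _ _
        have k3 : DD n (Finsupp.single veps 1 + Finsupp.single vs 1
            + Finsupp.single (vx2 i) 1 + Finsupp.single (vz1 j) 1)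
            < DD n (Finsupp.single veps 1 + Finsupp.single vs 1
              + Finsupp.single (vx1 i) 1 + Finsupp.single (vz2 j) 1) := by
          apply lex_lt_of_support (vx1 i) hne _ hb1
          intro u hu
          rcases mem4 hu with rfl | rfl | rfl | rfl
          · exact vx1_lt_veps _
          · exact vx1_lt_vs _
          · exact vx1_lt_vx2 _ _
          · exact vx1_lt_vz1 _ _
        exact supDeg_add_lt
          (supDeg_mono_lt (neg_ne_zero.mpr one_ne_zero) k2)
          (supDeg_mono_lt (neg_ne_zero.mpr one_ne_zero) k3)
  · -- T∞
    have himg : img c (Sum.inr u : Idx n)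
        = monomial (Finsupp.single veps 1 + Finsupp.single vs 2) 1 := by
      simp only [img]
      rw [XXX]
      congr 1
      rw [add_assoc]
      congr 1
      rw [← Finsupp.single_add]
    have hlexp : lexp c (Sum.inr u : Idx n)
        = Finsupp.single veps 1 + Finsupp.single vs 2 := rfl
    rw [himg, hlexp]
    constructor
    · show leadingCoeff _ _ = 1
      rw [monomial_eq_single, leadingCoeff_single DD_inj]
    · exact supDeg_monomial _ one_ne_zero



noncomputable def Lm (c : ℕ) (m : Idx n →₀ ℕ) : Vr n →₀ ℕ :=
  m.sum fun v e => e • lexp c v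

lemma Lm_add (c : ℕ) (m₁ m₂ : Idx n →₀ ℕ) : Lm c (m₁ + m₂) = Lm c m₁ + Lm c m₂ :=
  Finsupp.sum_add_index' (fun v => zero_smul _ _) (fun v e₁ e₂ => add_smul e₁ e₂ _)

lemma Lm_single (c : ℕ) (v : Idx n) (e : ℕ) :
    Lm c (Finsupp.single v e) = e • lexp c v :=
  Finsupp.sum_single_index (zero_smul _ _)

lemma syn_bot : ((⊥ : (MO n).syn) + ⊥) = (⊥ : (MO n).syn) := by
  rw [MonomialOrder.bot_eq_zero, add_zero]

lemma chi_monomial (c : ℕ) (m : Idx n →₀ ℕ) :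
    Monic (DD n) (aeval (img c) (monomial m 1 : MvPolynomial (Idx n) ℂ)) ∧
      supDegree (DD n) (aeval (img c) (monomial m 1 : MvPolynomial (Idx n) ℂ))
        = (MO n).toSyn (Lm c m) := by
  induction m using Finsupp.induction with
  | zero =>
    have : (aeval (img c) (monomial (0 : Idx n →₀ ℕ) 1 : MvPolynomial (Idx n) ℂ))
        = monomial 0 1 := by
      rw [monomial_zero', aeval_C, monomial_zero']
      rfl
    rw [this]
    constructor
    · show leadingCoeff _ _ = 1
      rw [monomial_eq_single, leadingCoeff_single DD_inj]
    · rw [supDeg_monomial _ one_ne_zero]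
      have : Lm c (0 : Idx n →₀ ℕ) = 0 := Finsupp.sum_zero_index
      rw [this]
  | single_add v e f hvf he IH =>
    have key : (monomial (Finsupp.single v e + f) (1:ℂ) : MvPolynomial (Idx n) ℂ)
        = monomial (Finsupp.single v e) 1 * monomial f 1 := by
      rw [monomial_mul, one_mul]
    have hpow : aeval (img c) (monomial (Finsupp.single v e) (1:ℂ)
        : MvPolynomial (Idx n) ℂ) = img c v ^ e := by
      rw [aeval_monomial, map_one, one_mul]
      exact Finsupp.prod_single_index (pow_zero _)
    have hmonic_v := (img_monic c v).1
    have hdeg_v := (img_monic c v).2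
    have hmonic_pow : Monic (DD n) (img c v ^ e) := hmonic_v.pow DD_add' DD_inj
    have hdeg_pow : supDegree (DD n) (img c v ^ e) = (MO n).toSyn (e • lexp c v) := by
      rw [hmonic_v.supDegree_pow DD_zero DD_add' DD_inj, hdeg_v, ← map_nsmul]
    constructor
    · rw [key, map_mul, hpow]
      exact hmonic_pow.mul DD_inj DD_add' IH.1
    · rw [key, map_mul, hpow,
        Monic.supDegree_mul DD_inj DD_add' syn_bot hmonic_pow IH.1,
        hdeg_pow, IH.2, ← map_add, Lm_add, Lm_single]



/-! ## multisets of pairs attached to monomials -/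

/-- the pair multiset of a variable -/
def pmm : Idx n → Multiset (ℕ × ℕ)
  | .inl p => {(p.1.1.val, p.1.2.val)}
  | .inr _ => 0

/-- the multiset of all pairs of a monomial (with multiplicity) -/
def SS (m : Idx n →₀ ℕ) : Multiset (ℕ × ℕ) := m.sum fun v e => e • pmm v

lemma sum_indicator {α : Type*} [DecidableEq α] (m : α →₀ ℕ) (a : α) :
    (m.sum fun v e => if v = a then e else 0) = m a := by
  rw [Finsupp.sum]
  rw [Finset.sum_eq_single a]
  · simp
  · intro b _ hb; rw [if_neg hb]
  · intro ha; rw [if_pos rfl, Finsupp.notMem_support_iff.mp ha]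

lemma mem_SS {m : Idx n →₀ ℕ} {p : ℕ × ℕ} (hp : p ∈ SS m) :
    ∃ (i j : Fin n) (hij : i < j),
      (Sum.inl ⟨(i, j), hij⟩ : Idx n) ∈ m.support ∧ p = (i.val, j.val) := by
  rw [SS, Finsupp.sum] at hp
  obtain ⟨v, hv, hpv⟩ := Multiset.mem_sum.mp hp
  rw [Multiset.mem_nsmul] at hpv
  obtain ⟨⟨i, j⟩, hij⟩ | u := v
  · refine ⟨i, j, hij, hv, ?_⟩
    simpa [pmm] using hpv.2
  · simp [pmm] at hpv

lemma count_SS (m : Idx n →₀ ℕ) (i j : Fin n) (hij : i < j) :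
    (SS m).count (i.val, j.val) = m (Sum.inl ⟨(i, j), hij⟩) := by
  rw [SS, Finsupp.sum, Multiset.count_sum']
  rw [show (m (Sum.inl ⟨(i, j), hij⟩))
    = m.sum fun v e => if v = (Sum.inl ⟨(i, j), hij⟩ : Idx n) then e else 0 from
      (sum_indicator m _).symm, Finsupp.sum]
  apply Finset.sum_congr rfl
  intro v _
  rw [Multiset.count_nsmul]
  obtain ⟨⟨a, b⟩, hab⟩ | u := v
  · rw [pmm, Multiset.count_singleton]
    by_cases h : (Sum.inl ⟨(a, b), hab⟩ : Idx n) = Sum.inl ⟨(i, j), hij⟩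
    · rw [if_pos h]
      obtain ⟨h1, h2⟩ : a = i ∧ b = j := by
        injection h with h'
        injection h' with h''
        exact ⟨congrArg Prod.fst h'', congrArg Prod.snd h''⟩
      subst h1; subst h2
      simp
    · rw [if_neg h, if_neg, mul_zero]
      intro hh
      apply h
      have hh' : (i.val, j.val) = (a.val, b.val) := hh
      have h1 : a = i := Fin.val_injective (congrArg Prod.fst hh').symm
      have h2 : b = j := Fin.val_injective (congrArg Prod.snd hh').symm
      subst h1; subst h2; rfl
  · simp [pmm]

/-- no-nesting condition on a multiset of pairs -/
def NF (S : Multiset (ℕ × ℕ)) : Prop := ∀ p ∈ S, ∀ q ∈ S, ¬(p.1 < q.1 ∧ q.2 < p.2)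

lemma NF_cons {a : ℕ × ℕ} {S : Multiset (ℕ × ℕ)} (h : NF (a ::ₘ S)) : NF S :=
  fun p hp q hq => h p (Multiset.mem_cons_of_mem hp) q (Multiset.mem_cons_of_mem hq)

/-- key uniqueness: a nest-free multiset of pairs is determined by its two marginals -/
lemma matching_unique :
    ∀ (k : ℕ) (S T : Multiset (ℕ × ℕ)), S.card = k → NF S → NF T →
      S.map Prod.fst = T.map Prod.fst → S.map Prod.snd = T.map Prod.snd → S = T := by
  intro k
  induction k with
  | zero =>
    intro S T hcard _ _ hfst _
    rw [Multiset.card_eq_zero.mp hcard] at hfst ⊢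
    have : T.card = 0 := by
      have := congrArg Multiset.card hfst
      simpa using this.symm
    exact (Multiset.card_eq_zero.mp this).symm
  | succ k IH =>
    intro S T hcard hS hT hfst hsnd
    have hSne : S ≠ 0 := by
      intro h; rw [h] at hcard; simp at hcard
    -- the minimal first coordinate
    have hfne : (S.map Prod.fst).toFinset.Nonempty := by
      rw [Multiset.toFinset_nonempty]
      simp [hSne]
    obtain ⟨a0, ha0S, ha0min⟩ : ∃ a0, a0 ∈ S.map Prod.fst ∧ ∀ x ∈ S.map Prod.fst, a0 ≤ x :=
      ⟨(S.map Prod.fst).toFinset.min' hfne,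
        Multiset.mem_toFinset.mp ((S.map Prod.fst).toFinset.min'_mem hfne),
        fun x hx => Finset.min'_le _ _ (Multiset.mem_toFinset.mpr hx)⟩
    -- minimal second coordinate among pairs with first coordinate a0, in S and in T
    have hmin2 : ∀ (U : Multiset (ℕ × ℕ)), a0 ∈ U.map Prod.fst → NF U →
        (∀ x ∈ U.map Prod.fst, a0 ≤ x) →
        ∃ b0, (a0, b0) ∈ U ∧ (∀ r ∈ U, r.2 ≥ b0 ∨ r.1 ≠ a0) ∧
          (∀ r ∈ U, r.2 < b0 → a0 < r.1) := by
      intro U haU hUnf haUmin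
      have hne : ((U.filter (fun p => p.1 = a0)).map Prod.snd).toFinset.Nonempty := by
        rw [Multiset.toFinset_nonempty]
        obtain ⟨p, hp, hp1⟩ := Multiset.mem_map.mp haU
        have : p ∈ U.filter (fun p => p.1 = a0) := Multiset.mem_filter.mpr ⟨hp, hp1⟩
        intro hz
        have : p.2 ∈ (U.filter (fun p => p.1 = a0)).map Prod.snd :=
          Multiset.mem_map_of_mem _ this
        rw [hz] at this
        simp at this
      set b0 := ((U.filter (fun p => p.1 = a0)).map Prod.snd).toFinset.min' hne with hb0
      have hb0U : (a0, b0) ∈ U := by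
        have := Multiset.mem_toFinset.mp
          (((U.filter (fun p => p.1 = a0)).map Prod.snd).toFinset.min'_mem hne)
        obtain ⟨p, hp, hp2⟩ := Multiset.mem_map.mp this
        obtain ⟨hpU, hp1⟩ := Multiset.mem_filter.mp hp
        have : p = (a0, b0) := Prod.ext hp1 hp2
        rwa [this] at hpU
      refine ⟨b0, hb0U, ?_, ?_⟩
      · intro r hr
        by_cases h1 : r.1 = a0
        · left
          apply Finset.min'_le
          rw [Multiset.mem_toFinset]
          exact Multiset.mem_map_of_mem _ (Multiset.mem_filter.mpr ⟨hr, h1⟩)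
        · right; exact h1
      · intro r hr hr2
        rcases lt_or_eq_of_le (haUmin r.1 (Multiset.mem_map_of_mem _ hr)) with h | h
        · exact h
        · exfalso
          have : b0 ≤ r.2 := by
            apply Finset.min'_le
            rw [Multiset.mem_toFinset]
            exact Multiset.mem_map_of_mem _ (Multiset.mem_filter.mpr ⟨hr, h.symm⟩)
          omega
    have ha0T : a0 ∈ T.map Prod.fst := by rw [← hfst]; exact ha0S
    have ha0Tmin : ∀ x ∈ T.map Prod.fst, a0 ≤ x := by rw [← hfst]; exact ha0min
    obtain ⟨b0, hb0S, hb0Smin, hb0Slt⟩ := hmin2 S ha0S hS ha0min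
    obtain ⟨b1, hb1T, hb1Tmin, hb1Tlt⟩ := hmin2 T ha0T hT ha0Tmin
    -- b0 = b1
    have hble : ∀ (U V : Multiset (ℕ × ℕ)) (bu bv : ℕ), NF V → (a0, bu) ∈ U → (a0, bv) ∈ V →
        U.map Prod.snd = V.map Prod.snd → (∀ r ∈ V, r.2 ≥ bv ∨ r.1 ≠ a0) →
        (∀ r ∈ V, r.2 < bv → a0 < r.1) → bv ≤ bu := by
      intro U V bu bv hVnf huU hvV hsnd' hmin' hlt'
      by_contra hcon
      push_neg at hcon
      -- bu < bv; bu appears among V's second coordinates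
      have : bu ∈ V.map Prod.snd := by
        rw [← hsnd']
        exact Multiset.mem_map_of_mem _ huU
      obtain ⟨r, hrV, hr2⟩ := Multiset.mem_map.mp this
      have h1 : a0 < r.1 := hlt' r hrV (by omega)
      exact (hVnf (a0, bv) hvV r hrV) ⟨h1, by simp [hr2]; omega⟩
    have hb01 : b0 = b1 := le_antisymm
      (hble T S b1 b0 hS hb1T hb0S hsnd.symm hb0Smin hb0Slt)
      (hble S T b0 b1 hT hb0S hb1T hsnd hb1Tmin hb1Tlt)
    rw [← hb01] at hb1T
    -- remove (a0, b0) from both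
    obtain ⟨S', rfl⟩ := Multiset.exists_cons_of_mem hb0S
    obtain ⟨T', rfl⟩ := Multiset.exists_cons_of_mem hb1T
    have hfst' : S'.map Prod.fst = T'.map Prod.fst := by
      rw [Multiset.map_cons, Multiset.map_cons] at hfst
      exact (Multiset.cons_inj_right _).mp hfst
    have hsnd' : S'.map Prod.snd = T'.map Prod.snd := by
      rw [Multiset.map_cons, Multiset.map_cons] at hsnd
      exact (Multiset.cons_inj_right _).mp hsnd
    have hcard' : S'.card = k := by
      rw [Multiset.card_cons] at hcard
      omega
    rw [IH S' T' hcard' (NF_cons hS) (NF_cons hT) hfst' hsnd']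



lemma toLex_eq_iff {a b : Fin 7 × Fin (n+1)} : (toLex a : Vr n) = toLex b ↔ a = b :=
  toLex.injective.eq_iff

lemma vx1_inj {i r : Fin n} : vx1 i = vx1 r ↔ i = r := by
  rw [vx1, vx1, toLex_eq_iff, Prod.mk.injEq]
  simp [Fin.castSucc_inj]

lemma vb_inj {i r : Fin n} : vb i = vb r ↔ i = r := by
  rw [vb, vb, toLex_eq_iff, Prod.mk.injEq]
  simp [Fin.castSucc_inj]

lemma vx2_inj {i r : Fin n} : vx2 i = vx2 r ↔ i = r := by
  rw [vx2, vx2, toLex_eq_iff, Prod.mk.injEq]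
  simp [Fin.castSucc_inj]

lemma vz2_inj {i r : Fin n} : vz2 i = vz2 r ↔ i = r := by
  rw [vz2, vz2, toLex_eq_iff, Prod.mk.injEq]
  simp [Fin.castSucc_inj]

lemma vs_lt_veps : (vs : Vr n) < veps := cls_lt (by decide) _ _
lemma vs_lt_vx2 (j : Fin n) : (vs : Vr n) < vx2 j := cls_lt (by decide) _ _
lemma vs_lt_vz2 (j : Fin n) : (vs : Vr n) < vz2 j := cls_lt (by decide) _ _
lemma veps_lt_vx2 (j : Fin n) : (veps : Vr n) < vx2 j := cls_lt (by decide) _ _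
lemma veps_lt_vz2 (j : Fin n) : (veps : Vr n) < vz2 j := cls_lt (by decide) _ _
lemma vx2_lt_vz2 (i j : Fin n) : vx2 i < vz2 j := cls_lt (by decide) _ _

lemma single_ite {a u : Vr n} (k : ℕ) :
    Finsupp.single a k u = if a = u then k else 0 := Finsupp.single_apply

lemma lexp_blk1 (c : ℕ) {i j : Fin n} (hij : (i, j).1 < (i, j).2) (h : j.val < c) :
    lexp c (Sum.inl ⟨(i, j), hij⟩ : Idx n)
      = Finsupp.single (vx1 i) 1 + Finsupp.single (vx2 j) 1 := by
  simp only [lexp, if_pos h]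

lemma lexp_blk2 (c : ℕ) {i j : Fin n} (hij : (i, j).1 < (i, j).2) (h1 : ¬ j.val < c)
    (h2 : c ≤ i.val) :
    lexp c (Sum.inl ⟨(i, j), hij⟩ : Idx n)
      = Finsupp.single (vb i) 1 + Finsupp.single (vz2 j) 1 := by
  simp only [lexp, if_neg h1, if_pos h2]

lemma lexp_str (c : ℕ) {i j : Fin n} (hij : (i, j).1 < (i, j).2) (h1 : ¬ j.val < c)
    (h2 : ¬ c ≤ i.val) :
    lexp c (Sum.inl ⟨(i, j), hij⟩ : Idx n)
      = Finsupp.single veps 1 + Finsupp.single vs 1 + Finsupp.single (vx1 i) 1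
        + Finsupp.single (vz2 j) 1 := by
  simp only [lexp, if_neg h1, if_neg h2]

lemma lexp_T (c : ℕ) (u : Unit) :
    lexp c (Sum.inr u : Idx n) = Finsupp.single veps 1 + Finsupp.single vs 2 := rfl

lemma pmm_fst_count (c : ℕ) (v : Idx n) (r : Fin n) :
    ((pmm v).map Prod.fst).count r.val = lexp c v (vx1 r) + lexp c v (vb r) := by
  obtain ⟨⟨i, j⟩, hij⟩ | u := v
  · rw [pmm, Multiset.map_singleton, Multiset.count_singleton]
    have hcount : (if (r.val : ℕ) = ((i.val, j.val) : ℕ × ℕ).1 then 1 else 0)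
        = if i = r then 1 else 0 := by
      by_cases h : i = r
      · subst h; simp
      · rw [if_neg h, if_neg (fun hh => h (Fin.val_injective hh.symm))]
    rw [hcount]
    by_cases h1 : (j.val : ℕ) < c
    · rw [lexp_blk1 c hij h1, Finsupp.add_apply, Finsupp.add_apply,
        single_ite, single_ite, single_ite, single_ite,
        if_neg (vx1_lt_vx2 r j).ne', if_neg (vx1_lt_vb i r).ne, if_neg (vb_lt_vx2 r j).ne']
      by_cases h : i = r
      · rw [if_pos (vx1_inj.mpr h), if_pos h]
        all_goals norm_num
      · rw [if_neg (fun hh => h (vx1_inj.mp hh)), if_neg h]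
        all_goals norm_num
    · by_cases h2 : c ≤ i.val
      · rw [lexp_blk2 c hij h1 h2, Finsupp.add_apply, Finsupp.add_apply,
          single_ite, single_ite, single_ite, single_ite,
          if_neg (vx1_lt_vb r i).ne', if_neg (vx1_lt_vz2 r j).ne',
          if_neg (vb_lt_vz2 r j).ne']
        by_cases h : i = r
        · rw [if_pos (vb_inj.mpr h), if_pos h]; simp
        · rw [if_neg (fun hh => h (vb_inj.mp hh)), if_neg h]
          all_goals norm_num
      · rw [lexp_str c hij h1 h2, Finsupp.add_apply, Finsupp.add_apply, Finsupp.add_apply,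
          Finsupp.add_apply, Finsupp.add_apply, Finsupp.add_apply,
          single_ite, single_ite, single_ite, single_ite, single_ite, single_ite,
          single_ite, single_ite,
          if_neg (vx1_lt_veps r).ne', if_neg (vx1_lt_vs r).ne', if_neg (vx1_lt_vz2 r j).ne',
          if_neg (vb_lt_veps r).ne', if_neg (vb_lt_vs r).ne', if_neg (vx1_lt_vb i r).ne,
          if_neg (vb_lt_vz2 r j).ne']
        by_cases h : i = r
        · rw [if_pos (vx1_inj.mpr h), if_pos h]
          all_goals norm_num
        · rw [if_neg (fun hh => h (vx1_inj.mp hh)), if_neg h]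
          all_goals norm_num
  · rw [pmm, lexp_T, Finsupp.add_apply, Finsupp.add_apply,
      single_ite, single_ite, single_ite, single_ite,
      if_neg (vx1_lt_veps r).ne', if_neg (vx1_lt_vs r).ne',
      if_neg (vb_lt_veps r).ne', if_neg (vb_lt_vs r).ne']
    simp

lemma pmm_snd_count (c : ℕ) (v : Idx n) (r : Fin n) :
    ((pmm v).map Prod.snd).count r.val = lexp c v (vx2 r) + lexp c v (vz2 r) := by
  obtain ⟨⟨i, j⟩, hij⟩ | u := v
  · rw [pmm, Multiset.map_singleton, Multiset.count_singleton]
    have hcount : (if (r.val : ℕ) = ((i.val, j.val) : ℕ × ℕ).2 then 1 else 0)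
        = if j = r then 1 else 0 := by
      by_cases h : j = r
      · subst h; simp
      · rw [if_neg h, if_neg (fun hh => h (Fin.val_injective hh.symm))]
    rw [hcount]
    by_cases h1 : (j.val : ℕ) < c
    · rw [lexp_blk1 c hij h1, Finsupp.add_apply, Finsupp.add_apply,
        single_ite, single_ite, single_ite, single_ite,
        if_neg (vx1_lt_vx2 i r).ne, if_neg (vx1_lt_vz2 i r).ne,
        if_neg (vx2_lt_vz2 j r).ne]
      by_cases h : j = r
      · rw [if_pos (vx2_inj.mpr h), if_pos h]
        all_goals norm_num
      · rw [if_neg (fun hh => h (vx2_inj.mp hh)), if_neg h]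
        all_goals norm_num
    · by_cases h2 : c ≤ i.val
      · rw [lexp_blk2 c hij h1 h2, Finsupp.add_apply, Finsupp.add_apply,
          single_ite, single_ite, single_ite, single_ite,
          if_neg (vb_lt_vx2 i r).ne, if_neg (vb_lt_vz2 i r).ne,
          if_neg (vx2_lt_vz2 r j).ne']
        by_cases h : j = r
        · rw [if_pos (vz2_inj.mpr h), if_pos h]
          all_goals norm_num
        · rw [if_neg (fun hh => h (vz2_inj.mp hh)), if_neg h]
          all_goals norm_num
      · rw [lexp_str c hij h1 h2, Finsupp.add_apply, Finsupp.add_apply, Finsupp.add_apply,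
          Finsupp.add_apply, Finsupp.add_apply, Finsupp.add_apply,
          single_ite, single_ite, single_ite, single_ite, single_ite, single_ite,
          single_ite, single_ite,
          if_neg (vs_lt_vx2 r).ne, if_neg (veps_lt_vx2 r).ne, if_neg (vx1_lt_vx2 i r).ne,
          if_neg (vs_lt_vz2 r).ne, if_neg (veps_lt_vz2 r).ne, if_neg (vx1_lt_vz2 i r).ne,
          if_neg (vx2_lt_vz2 r j).ne']
        by_cases h : j = r
        · rw [if_pos (vz2_inj.mpr h), if_pos h]; simp
        · rw [if_neg (fun hh => h (vz2_inj.mp hh)), if_neg h]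
          all_goals norm_num
  · rw [pmm, lexp_T, Finsupp.add_apply, Finsupp.add_apply,
      single_ite, single_ite, single_ite, single_ite,
      if_neg (vs_lt_vx2 r).ne, if_neg (veps_lt_vx2 r).ne,
      if_neg (vs_lt_vz2 r).ne, if_neg (veps_lt_vz2 r).ne]
    simp

lemma lexp_vs_veps (c : ℕ) (v : Idx n) :
    lexp c v vs = lexp c v veps + (if v = Sum.inr () then 1 else 0) := by
  obtain ⟨⟨i, j⟩, hij⟩ | u := v
  · rw [if_neg (by simp), add_zero]
    by_cases h1 : (j.val : ℕ) < c
    · rw [lexp_blk1 c hij h1, Finsupp.add_apply, Finsupp.add_apply,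
        single_ite, single_ite, single_ite, single_ite,
        if_neg (vx1_lt_vs i).ne, if_neg (vs_lt_vx2 j).ne', if_neg (vx1_lt_veps i).ne,
        if_neg (veps_lt_vx2 j).ne']
      all_goals norm_num
    · by_cases h2 : c ≤ i.val
      · rw [lexp_blk2 c hij h1 h2, Finsupp.add_apply, Finsupp.add_apply,
          single_ite, single_ite, single_ite, single_ite,
          if_neg (vb_lt_vs i).ne, if_neg (vs_lt_vz2 j).ne', if_neg (vb_lt_veps i).ne,
          if_neg (veps_lt_vz2 j).ne']
        all_goals norm_num
      · rw [lexp_str c hij h1 h2, Finsupp.add_apply, Finsupp.add_apply, Finsupp.add_apply,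
          Finsupp.add_apply, Finsupp.add_apply, Finsupp.add_apply,
          single_ite, single_ite, single_ite, single_ite, single_ite, single_ite,
          single_ite, single_ite,
          if_neg (vs_lt_veps : (vs : Vr n) < veps).ne', if_pos rfl,
          if_neg (vx1_lt_vs i).ne, if_neg (vs_lt_vz2 j).ne',
          if_pos rfl, if_neg (vx1_lt_veps i).ne, if_neg (veps_lt_vz2 j).ne']
        all_goals simp [(vs_lt_veps : (vs : Vr n) < veps).ne]
  · rw [if_pos rfl, lexp_T, Finsupp.add_apply, Finsupp.add_apply,
      single_ite, single_ite, single_ite, single_ite,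
      if_neg (vs_lt_veps : (vs : Vr n) < veps).ne', if_pos rfl, if_pos rfl,
      if_neg (vs_lt_veps : (vs : Vr n) < veps).ne]
    all_goals norm_num



lemma Lm_apply (c : ℕ) (m : Idx n →₀ ℕ) (u : Vr n) :
    Lm c m u = m.sum fun v e => e * lexp c v u := by
  rw [Lm, Finsupp.sum_apply]
  apply Finsupp.sum_congr
  intro v _
  rw [Finsupp.smul_apply, smul_eq_mul]

lemma SS_map_fst_count (c : ℕ) (m : Idx n →₀ ℕ) (r : Fin n) :
    ((SS m).map Prod.fst).count r.val = Lm c m (vx1 r) + Lm c m (vb r) := by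
  rw [SS, Finsupp.multiset_map_sum, Lm_apply, Lm_apply, ← Finsupp.sum_add, Finsupp.sum,
    Finsupp.sum, Multiset.count_sum']
  apply Finset.sum_congr rfl
  intro v _
  have hmap : Multiset.map Prod.fst (m v • pmm v) = m v • Multiset.map Prod.fst (pmm v) :=
    (Multiset.mapAddMonoidHom Prod.fst).map_nsmul _ _
  rw [hmap, Multiset.count_nsmul, pmm_fst_count c v r, mul_add]

lemma SS_map_snd_count (c : ℕ) (m : Idx n →₀ ℕ) (r : Fin n) :
    ((SS m).map Prod.snd).count r.val = Lm c m (vx2 r) + Lm c m (vz2 r) := by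
  rw [SS, Finsupp.multiset_map_sum, Lm_apply, Lm_apply, ← Finsupp.sum_add, Finsupp.sum,
    Finsupp.sum, Multiset.count_sum']
  apply Finset.sum_congr rfl
  intro v _
  have hmap : Multiset.map Prod.snd (m v • pmm v) = m v • Multiset.map Prod.snd (pmm v) :=
    (Multiset.mapAddMonoidHom Prod.snd).map_nsmul _ _
  rw [hmap, Multiset.count_nsmul, pmm_snd_count c v r, mul_add]

lemma Lm_vs_eq (c : ℕ) (m : Idx n →₀ ℕ) :
    Lm c m vs = Lm c m veps + m (Sum.inr ()) := by
  rw [Lm_apply, Lm_apply, ← sum_indicator m (Sum.inr () : Idx n), ← Finsupp.sum_add]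
  apply Finsupp.sum_congr
  intro v _
  rw [lexp_vs_veps c v, mul_add, mul_ite, mul_one, mul_zero]

lemma Std_NF {m : Idx n →₀ ℕ} (h : Std m) : NF (SS m) := by
  intro p hp q hq hpat
  obtain ⟨i, j, hij, hv, rfl⟩ := mem_SS hp
  obtain ⟨k, l, hkl, hw, rfl⟩ := mem_SS hq
  exact h _ hv _ hw ⟨by exact_mod_cast hpat.1, by exact_mod_cast hpat.2⟩

lemma fst_mem_lt {m : Idx n →₀ ℕ} {a : ℕ} (h : a ∈ (SS m).map Prod.fst) : a < n := by
  obtain ⟨p, hp, rfl⟩ := Multiset.mem_map.mp h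
  obtain ⟨i, j, hij, -, rfl⟩ := mem_SS hp
  exact i.isLt

lemma snd_mem_lt {m : Idx n →₀ ℕ} {a : ℕ} (h : a ∈ (SS m).map Prod.snd) : a < n := by
  obtain ⟨p, hp, rfl⟩ := Multiset.mem_map.mp h
  obtain ⟨i, j, hij, -, rfl⟩ := mem_SS hp
  exact j.isLt

lemma Lm_injective (c : ℕ) {m m' : Idx n →₀ ℕ} (hm : Std m) (hm' : Std m')
    (h : Lm c m = Lm c m') : m = m' := by
  have hT : m (Sum.inr ()) = m' (Sum.inr ()) := by
    have h1 : Lm c m vs = Lm c m' vs := by rw [h]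
    have h2 : Lm c m veps = Lm c m' veps := by rw [h]
    rw [Lm_vs_eq, Lm_vs_eq] at h1
    omega
  have hfst : (SS m).map Prod.fst = (SS m').map Prod.fst := by
    ext a
    by_cases ha : a < n
    · have heq : a = (⟨a, ha⟩ : Fin n).val := rfl
      rw [heq, SS_map_fst_count c m, SS_map_fst_count c m', h]
    · rw [Multiset.count_eq_zero_of_notMem (fun hc => ha (fst_mem_lt hc)),
        Multiset.count_eq_zero_of_notMem (fun hc => ha (fst_mem_lt hc))]
  have hsnd : (SS m).map Prod.snd = (SS m').map Prod.snd := by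
    ext a
    by_cases ha : a < n
    · have heq : a = (⟨a, ha⟩ : Fin n).val := rfl
      rw [heq, SS_map_snd_count c m, SS_map_snd_count c m', h]
    · rw [Multiset.count_eq_zero_of_notMem (fun hc => ha (snd_mem_lt hc)),
        Multiset.count_eq_zero_of_notMem (fun hc => ha (snd_mem_lt hc))]
  have hSS : SS m = SS m' :=
    matching_unique (SS m).card (SS m) (SS m') rfl (Std_NF hm) (Std_NF hm') hfst hsnd
  ext v
  obtain ⟨⟨i, j⟩, hij⟩ | u := v
  · rw [← count_SS m i j hij, ← count_SS m' i j hij, hSS]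
  · cases u
    exact hT



lemma supDeg_smul {r : ℂ} (hr : r ≠ 0) (p : MvPolynomial (Vr n) ℂ) :
    supDegree (DD n) (r • p) = supDegree (DD n) p := by
  unfold AddMonoidAlgebra.supDegree
  congr 1
  exact Finsupp.support_smul_eq hr

end Stmt10

open Stmt10 AddMonoidAlgebra in
/-- For `c, d > 2` and `n = c + d`, the ideal `I` is radical: `√I = I`. -/
theorem stmt_10 (c d : ℕ) (hc : 2 < c) (hd : 2 < d) :
    (Ideal.span (IGens c (c + d))).radical = Ideal.span (IGens c (c + d)) := by
  apply le_antisymm _ Ideal.le_radical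
  intro f hf
  have hker : ∀ g ∈ Ideal.span (IGens c (c + d)), aeval (img (n := c + d) c) g = 0 := by
    intro g hg
    have hle : Ideal.span (IGens c (c + d))
        ≤ RingHom.ker (aeval (img (n := c + d) c)).toRingHom := by
      rw [Ideal.span_le]
      intro P hP
      exact img_gen_zero c hP
    exact hle hg
  obtain ⟨k, hk⟩ := hf
  have hchi : aeval (img (n := c + d) c) f = 0 := by
    have h1 : (aeval (img (n := c + d) c) f) ^ k = 0 := by
      rw [← map_pow]
      exact hker _ hk
    have hk0 : k ≠ 0 := by
      rintro rfl
      rw [pow_zero] at h1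
      exact one_ne_zero h1
    exact (pow_eq_zero_iff hk0).mp h1
  have hfN := all_mem c f
  rw [NN, Submodule.mem_sup] at hfN
  obtain ⟨g, hg, h, hh, rfl⟩ := hfN
  have hgmem : g ∈ Ideal.span (IGens c (c + d)) := hg
  have hhk : aeval (img (n := c + d) c) h = 0 := by
    rw [map_add, hker g hgmem, zero_add] at hchi
    exact hchi
  rw [Finsupp.mem_span_range_iff_exists_finsupp] at hh
  obtain ⟨cc, rfl⟩ := hh
  have hcc : cc = 0 := by
    by_contra hne
    have hsum : (∑ m ∈ cc.support,
        cc m • aeval (img (n := c + d) c) (monomial m.1 1 : MvPolynomial (Idx (c + d)) ℂ))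
        = 0 := by
      rw [← hhk, Finsupp.sum, map_sum]
      apply Finset.sum_congr rfl
      intro m _
      rw [map_smul]
    have hne0 : ∀ m ∈ cc.support,
        cc m • aeval (img (n := c + d) c) (monomial m.1 1 : MvPolynomial (Idx (c + d)) ℂ)
          ≠ 0 := by
      intro m hm
      exact smul_ne_zero (Finsupp.mem_support_iff.mp hm)
        ((chi_monomial c m.1).1.ne_zero)
    have hinj : (↑cc.support : Set {m : Idx (c + d) →₀ ℕ // Std m}).InjOn
        (AddMonoidAlgebra.supDegree (DD (c + d)) ∘ fun m =>
          cc m • aeval (img (n := c + d) c) (monomial m.1 1 : MvPolynomial (Idx (c + d)) ℂ)) := by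
      intro m1 hm1 m2 hm2 heq
      simp only [Function.comp_apply] at heq
      rw [supDeg_smul (Finsupp.mem_support_iff.mp hm1),
        supDeg_smul (Finsupp.mem_support_iff.mp hm2),
        (chi_monomial c m1.1).2, (chi_monomial c m2.1).2] at heq
      have := (MO (c + d)).toSyn.injective heq
      exact Subtype.ext (Lm_injective c m1.2 m2.2 this)
    have := AddMonoidAlgebra.sum_ne_zero_of_injOn_supDegree
      (Finsupp.support_nonempty_iff.mpr hne) hne0 hinj
    exact this hsum
  rw [hcc, Finsupp.sum_zero_index, add_zero]
  exact hgmem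
end

section
/- Let c, d > 2 and n = c+d. The class of T_∞ is a prime element in R = ℂ[T_{ij}, T_∞]/I, i.e., R/(T_∞) ≅ ℂ[T_{ij}, T_∞]/J is an integral domain. -/
open MvPolynomial

namespace StmtAux

/-! ### The parametrizing map `Φ` -/

/-- target variable type, ordered lexicographically -/
abbrev σB (n : ℕ) := Lex (Fin n × Fin 2)

noncomputable def fvar (c n : ℕ) : Idx n → MvPolynomial (σB n) ℂ
  | Sum.inl p => X (toLex (p.1.1, 0)) * X (toLex (p.1.2, 1)) -
      (if p.1.1.val < c ∧ c ≤ p.1.2.val then 0 else X (toLex (p.1.2, 0)) * X (toLex (p.1.1, 1)))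
  | Sum.inr _ => 0

lemma phi_JGens (c n : ℕ) : ∀ g ∈ JGens c n, aeval (fvar c n) g = 0 := by
  intro g hg
  rcases hg with rfl | ⟨i, j, k, l, hij, hjk, hkl, h⟩
  · simp [Tinf, fvar]
  have hij' : i.val < j.val := hij
  have hjk' : j.val < k.val := hjk
  have hkl' : k.val < l.val := hkl
  rcases h with ⟨⟨h1, h2⟩, rfl⟩ | ⟨hcond, rfl⟩
  · simp only [W, map_add, map_sub, map_mul, map_neg, aeval_X, fvar]
    split_ifs <;> first | omega | ring
  · rcases le_or_gt c i.val with hci | hic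
    · simp only [W, map_add, map_sub, map_mul, map_neg, aeval_X, fvar]
      split_ifs <;> first | omega | ring
    · rcases le_or_gt c j.val with hcj | hjc
      · simp only [W, map_add, map_sub, map_mul, map_neg, aeval_X, fvar]
        split_ifs <;> first | omega | ring
      · rcases le_or_gt c k.val with hck | hkc
        · exact absurd ⟨hjc, hck⟩ hcond
        · rcases le_or_gt c l.val with hcl | hlc
          · simp only [W, map_add, map_sub, map_mul, map_neg, aeval_X, fvar]
            split_ifs <;> first | omega | ring
          · simp only [W, map_add, map_sub, map_mul, map_neg, aeval_X, fvar]
            split_ifs <;> first | omega | ring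

/-! ### Straightening: standard monomials span modulo `J` -/

def wgt {n : ℕ} : Idx n → ℕ := Sum.elim (fun p => (p.val.2.val - p.val.1.val)^2) (fun _ => 0)

def μ {n : ℕ} (m : Idx n →₀ ℕ) : ℕ := m.sum fun q k => k * wgt q

def Nested {n : ℕ} (p q : PIdx n) : Prop := p.val.1 < q.val.1 ∧ q.val.2 < p.val.2

def Std {n : ℕ} (m : Idx n →₀ ℕ) : Prop :=
  m (Sum.inr ()) = 0 ∧
    ∀ p q : PIdx n, Sum.inl p ∈ m.support → Sum.inl q ∈ m.support → ¬ Nested p q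

noncomputable def V (c n : ℕ) : Submodule ℂ (MvPolynomial (Idx n) ℂ) :=
  Submodule.span ℂ {x | ∃ m, Std m ∧ x = monomial m 1} ⊔
    (Ideal.span (JGens c n)).restrictScalars ℂ

lemma mu_add {n : ℕ} (m₁ m₂ : Idx n →₀ ℕ) : μ (m₁ + m₂) = μ m₁ + μ m₂ := by
  unfold μ
  exact Finsupp.sum_add_index' (fun a => by simp) (fun a k₁ k₂ => by ring)

lemma mu_single {n : ℕ} (a : Idx n) (k : ℕ) : μ (Finsupp.single a k) = k * wgt a := by
  unfold μ; exact Finsupp.sum_single_index (by simp)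

lemma sq_ineq1 (a b c d : ℕ) (h1 : a < b) (h2 : b < c) (h3 : c < d) :
    (c - a)^2 + (d - b)^2 < (d - a)^2 + (c - b)^2 := by
  zify [show a ≤ c by omega, show b ≤ d by omega, show a ≤ d by omega, show b ≤ c by omega]
  nlinarith [mul_pos (show (0:ℤ) < b - a by omega) (show (0:ℤ) < d - c by omega)]

lemma sq_ineq2 (a b c d : ℕ) (h1 : a < b) (h2 : b < c) (h3 : c < d) :
    (b - a)^2 + (d - c)^2 < (d - a)^2 + (c - b)^2 := by
  zify [show a ≤ b by omega, show c ≤ d by omega, show a ≤ d by omega, show b ≤ c by omega]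
  nlinarith [mul_pos (show (0:ℤ) < b - a by omega) (show (0:ℤ) < d - c by omega),
    mul_pos (show (0:ℤ) < c - b by omega) (show (0:ℤ) < d - a by omega)]

lemma sub_decomp {α : Type*} [DecidableEq α] (m : α →₀ ℕ) (a b : α)
    (ha : 1 ≤ m a) (hb : 1 ≤ m b) (hab : a ≠ b) :
    m = Finsupp.single a 1 + Finsupp.single b 1 + (m - Finsupp.single a 1 - Finsupp.single b 1) := by
  ext r
  simp only [Finsupp.add_apply, Finsupp.tsub_apply, Finsupp.single_apply]
  split_ifs with h1 h2 h2
  · exact absurd (h1.trans h2.symm) hab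
  · subst h1; omega
  · subst h2; omega
  · omega

lemma sub_decomp_one {α : Type*} [DecidableEq α] (m : α →₀ ℕ) (a : α) (ha : 1 ≤ m a) :
    m = Finsupp.single a 1 + (m - Finsupp.single a 1) := by
  ext r
  simp only [Finsupp.add_apply, Finsupp.tsub_apply, Finsupp.single_apply]
  split_ifs with h1
  · subst h1; omega
  · omega

lemma monomial_eq_XXmul {n : ℕ} (a b : Idx n) (t : Idx n →₀ ℕ) :
    (monomial (Finsupp.single a 1 + Finsupp.single b 1 + t) (1:ℂ) : MvPolynomial (Idx n) ℂ)
      = X a * X b * monomial t 1 := by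
  rw [X, X, monomial_mul, monomial_mul, one_mul, one_mul]

lemma mono_mem (c n : ℕ) : ∀ (N : ℕ) (m : Idx n →₀ ℕ), μ m ≤ N →
    (monomial m 1 : MvPolynomial (Idx n) ℂ) ∈ V c n := by
  intro N
  induction N using Nat.strong_induction_on with
  | _ N IH =>
  intro m hm
  by_cases h0 : m (Sum.inr ()) = 0
  · by_cases hs : Std m
    · exact Submodule.mem_sup_left (Submodule.subset_span ⟨m, hs, rfl⟩)
    · -- non-standard: find nested pair and straighten
      have hex : ∃ p q : PIdx n, Sum.inl p ∈ m.support ∧ Sum.inl q ∈ m.support ∧ Nested p q := by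
        by_contra hh
        push_neg at hh
        exact hs ⟨h0, fun p q hp hq => hh p q hp hq⟩
      obtain ⟨p, q, hp, hq, hnest⟩ := hex
      set i := p.val.1 with hi
      set j := q.val.1 with hj
      set k := q.val.2 with hk
      set l := p.val.2 with hl
      have hij : i < j := hnest.1
      have hjk : j < k := q.prop
      have hkl : k < l := hnest.2
      have hil : i < l := hij.trans (hjk.trans hkl)
      have hik : i < k := hij.trans hjk
      have hjl : j < l := hjk.trans hkl
      have hpq : (Sum.inl p : Idx n) ≠ Sum.inl q := by
        intro h
        have hpq' : p = q := Sum.inl.inj h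
        rw [hpq'] at hnest
        exact lt_irrefl _ hnest.1
      have hp1 : 1 ≤ m (Sum.inl p) := Nat.one_le_iff_ne_zero.mpr (Finsupp.mem_support_iff.mp hp)
      have hq1 : 1 ≤ m (Sum.inl q) := Nat.one_le_iff_ne_zero.mpr (Finsupp.mem_support_iff.mp hq)
      set m' : Idx n →₀ ℕ := m - Finsupp.single (Sum.inl p) 1 - Finsupp.single (Sum.inl q) 1
        with hm'
      have hdec : m = Finsupp.single (Sum.inl p) 1 + Finsupp.single (Sum.inl q) 1 + m' :=
        sub_decomp m _ _ hp1 hq1 hpq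
      have hpeq : (⟨(i, l), hil⟩ : PIdx n) = p := by
        apply Subtype.ext; exact Prod.ext rfl rfl
      have hqeq : (⟨(j, k), hjk⟩ : PIdx n) = q := by
        apply Subtype.ext; exact Prod.ext rfl rfl
      have key : (monomial m 1 : MvPolynomial (Idx n) ℂ) = W i l hil * W j k hjk * monomial m' 1 := by
        conv_lhs => rw [hdec]
        rw [monomial_eq_XXmul]
        rw [W, W, hpeq, hqeq]
      -- μ facts
      have hμm : μ m = wgt (Sum.inl p : Idx n) + wgt (Sum.inl q : Idx n) + μ m' := by
        conv_lhs => rw [hdec]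
        rw [mu_add, mu_add, mu_single, mu_single]; ring
      have hwp : wgt (Sum.inl p : Idx n) = (l.val - i.val)^2 := rfl
      have hwq : wgt (Sum.inl q : Idx n) = (k.val - j.val)^2 := rfl
      rw [hwp, hwq] at hμm
      have hij' : i.val < j.val := hij
      have hjk' : j.val < k.val := hjk
      have hkl' : k.val < l.val := hkl
      have h1w : 1 ≤ (l.val - i.val)^2 := Nat.one_le_pow _ _ (by omega)
      have h2w : 1 ≤ (k.val - j.val)^2 := Nat.one_le_pow _ _ (by omega)
      -- the two smaller monomials
      have mem1 : (monomial (Finsupp.single (Sum.inl ⟨(i,k),hik⟩ : Idx n) 1 +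
          Finsupp.single (Sum.inl ⟨(j,l),hjl⟩ : Idx n) 1 + m') 1 :
            MvPolynomial (Idx n) ℂ) ∈ V c n := by
        apply IH (μ m - 1) (by omega)
        rw [mu_add, mu_add, mu_single, mu_single]
        have : wgt (Sum.inl (⟨(i,k),hik⟩ : PIdx n) : Idx n) = (k.val - i.val)^2 := rfl
        rw [this]
        have : wgt (Sum.inl (⟨(j,l),hjl⟩ : PIdx n) : Idx n) = (l.val - j.val)^2 := rfl
        rw [this]
        have hlt := sq_ineq1 i.val j.val k.val l.val hij' hjk' hkl'
        omega
      have mem2 : (monomial (Finsupp.single (Sum.inl ⟨(i,j),hij⟩ : Idx n) 1 +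
          Finsupp.single (Sum.inl ⟨(k,l),hkl⟩ : Idx n) 1 + m') 1 :
            MvPolynomial (Idx n) ℂ) ∈ V c n := by
        apply IH (μ m - 1) (by omega)
        rw [mu_add, mu_add, mu_single, mu_single]
        have h1 : wgt (Sum.inl (⟨(i,j),hij⟩ : PIdx n) : Idx n) = (j.val - i.val)^2 := rfl
        have h2 : wgt (Sum.inl (⟨(k,l),hkl⟩ : PIdx n) : Idx n) = (l.val - k.val)^2 := rfl
        rw [h1, h2]
        have hlt := sq_ineq2 i.val j.val k.val l.val hij' hjk' hkl'
        omega
      by_cases hmix : j.val < c ∧ c ≤ k.val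
      · -- binomial relation
        set g : MvPolynomial (Idx n) ℂ :=
          - W i k (hij.trans hjk) * W j l (hjk.trans hkl)
            + W i l (hij.trans (hjk.trans hkl)) * W j k hjk with hg
        have hgmem : g ∈ Ideal.span (JGens c n) :=
          Ideal.subset_span (Set.mem_insert_iff.mpr (Or.inr
            ⟨i, j, k, l, hij, hjk, hkl, Or.inl ⟨hmix, rfl⟩⟩))
        have hid : (monomial m 1 : MvPolynomial (Idx n) ℂ) =
            W i k hik * W j l hjl * monomial m' 1 + g * monomial m' 1 := by
          rw [key, hg]; ring
        rw [hid]
        apply Submodule.add_mem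
        · rw [show (W i k hik * W j l hjl * monomial m' 1 : MvPolynomial (Idx n) ℂ) =
            monomial (Finsupp.single (Sum.inl ⟨(i,k),hik⟩ : Idx n) 1 +
              Finsupp.single (Sum.inl ⟨(j,l),hjl⟩ : Idx n) 1 + m') 1 from
              (monomial_eq_XXmul _ _ _).symm]
          exact mem1
        · exact Submodule.mem_sup_right (Ideal.mul_mem_right _ _ hgmem)
      · -- trinomial relation
        set g : MvPolynomial (Idx n) ℂ :=
          W i j hij * W k l hkl - W i k (hij.trans hjk) * W j l (hjk.trans hkl)
            + W i l (hij.trans (hjk.trans hkl)) * W j k hjk with hg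
        have hgmem : g ∈ Ideal.span (JGens c n) :=
          Ideal.subset_span (Set.mem_insert_iff.mpr (Or.inr
            ⟨i, j, k, l, hij, hjk, hkl, Or.inr ⟨hmix, rfl⟩⟩))
        have hid : (monomial m 1 : MvPolynomial (Idx n) ℂ) =
            W i k hik * W j l hjl * monomial m' 1
              - W i j hij * W k l hkl * monomial m' 1 + g * monomial m' 1 := by
          rw [key, hg]; ring
        rw [hid]
        apply Submodule.add_mem
        · apply Submodule.sub_mem
          · rw [show (W i k hik * W j l hjl * monomial m' 1 : MvPolynomial (Idx n) ℂ) =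
              monomial (Finsupp.single (Sum.inl ⟨(i,k),hik⟩ : Idx n) 1 +
                Finsupp.single (Sum.inl ⟨(j,l),hjl⟩ : Idx n) 1 + m') 1 from
                (monomial_eq_XXmul _ _ _).symm]
            exact mem1
          · rw [show (W i j hij * W k l hkl * monomial m' 1 : MvPolynomial (Idx n) ℂ) =
              monomial (Finsupp.single (Sum.inl ⟨(i,j),hij⟩ : Idx n) 1 +
                Finsupp.single (Sum.inl ⟨(k,l),hkl⟩ : Idx n) 1 + m') 1 from
                (monomial_eq_XXmul _ _ _).symm]
            exact mem2
        · exact Submodule.mem_sup_right (Ideal.mul_mem_right _ _ hgmem)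
  · -- Tinf divides the monomial
    have h1 : 1 ≤ m (Sum.inr ()) := Nat.one_le_iff_ne_zero.mpr h0
    have hdec := sub_decomp_one m (Sum.inr ()) h1
    have : (monomial m 1 : MvPolynomial (Idx n) ℂ)
        = Tinf * monomial (m - Finsupp.single (Sum.inr ()) 1) 1 := by
      conv_lhs => rw [hdec]
      rw [Tinf, X, monomial_mul, one_mul]
    rw [this]
    exact Submodule.mem_sup_right
      (Ideal.mul_mem_right _ _ (Ideal.subset_span (Set.mem_insert _ _)))

lemma top_le_V (c n : ℕ) : ∀ p : MvPolynomial (Idx n) ℂ, p ∈ V c n := by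
  intro p
  rw [← p.support_sum_monomial_coeff]
  apply Submodule.sum_mem
  intro v hv
  have : (monomial v (coeff v p) : MvPolynomial (Idx n) ℂ) = coeff v p • monomial v 1 := by
    rw [smul_monomial, smul_eq_mul, mul_one]
  rw [this]
  exact Submodule.smul_mem _ _ (mono_mem c n (μ v) v le_rfl)

section Lead
variable {n : ℕ}

lemma lex_add_cancel {α β γ δ : σB n →₀ ℕ} (h1 : (toLex β : Lex (σB n →₀ ℕ)) ≤ toLex α)
    (h2 : (toLex δ : Lex (σB n →₀ ℕ)) ≤ toLex γ) (h3 : β + δ = α + γ) : β = α ∧ δ = γ := by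
  have h3' : (toLex β : Lex (σB n →₀ ℕ)) + toLex δ = toLex α + toLex γ := congrArg toLex h3
  rcases h1.lt_or_eq with hlt | heq
  · exfalso
    have hx := add_lt_add_of_lt_of_le hlt h2
    rw [h3'] at hx
    exact lt_irrefl _ hx
  · have hβα : β = α := toLex.injective heq
    subst hβα
    exact ⟨rfl, toLex.injective (add_left_cancel h3')⟩

def Lead (f : MvPolynomial (σB n) ℂ) (α : σB n →₀ ℕ) : Prop :=
  coeff α f = 1 ∧ ∀ β ∈ f.support, toLex β ≤ toLex α

lemma lead_one : Lead (1 : MvPolynomial (σB n) ℂ) 0 := by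
  constructor
  · simp
  · intro β hβ
    have h1 : (1 : MvPolynomial (σB n) ℂ) = monomial 0 1 := by
      rw [monomial_zero']; rfl
    rw [h1, support_monomial] at hβ
    simp only [one_ne_zero, if_false, Finset.mem_singleton] at hβ
    subst hβ
    exact le_rfl

lemma lead_mul {f g : MvPolynomial (σB n) ℂ} {α γ : σB n →₀ ℕ}
    (hf : Lead f α) (hg : Lead g γ) : Lead (f * g) (α + γ) := by
  constructor
  · rw [coeff_mul]
    rw [Finset.sum_eq_single (α, γ)]
    · rw [hf.1, hg.1, one_mul]
    · rintro ⟨β, δ⟩ hmem hne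
      simp only [Finset.HasAntidiagonal.mem_antidiagonal] at hmem
      by_contra hz
      have hβ : coeff β f ≠ 0 := fun h => hz (by simp [h])
      have hδ : coeff δ g ≠ 0 := fun h => hz (by simp [h])
      have h1 := hf.2 β (mem_support_iff.mpr hβ)
      have h2 := hg.2 δ (mem_support_iff.mpr hδ)
      obtain ⟨e1, e2⟩ := lex_add_cancel h1 h2 hmem
      exact hne (by rw [e1, e2])
    · intro h
      exact absurd (by simp) h
  · intro β hβ
    have hmem := MvPolynomial.support_mul f g hβ
    rw [Finset.mem_add] at hmem
    obtain ⟨β₁, hβ₁, β₂, hβ₂, rfl⟩ := hmem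
    exact add_le_add (hf.2 β₁ hβ₁) (hg.2 β₂ hβ₂)

lemma lead_pow {f : MvPolynomial (σB n) ℂ} {α : σB n →₀ ℕ} (hf : Lead f α) (k : ℕ) :
    Lead (f ^ k) (k • α) := by
  induction k with
  | zero => simpa using lead_one
  | succ k ih =>
    rw [pow_succ, succ_nsmul]
    exact lead_mul ih hf

lemma lead_prod {ι : Type*} (s : Finset ι) (F : ι → MvPolynomial (σB n) ℂ) (G : ι → σB n →₀ ℕ)
    (h : ∀ i ∈ s, Lead (F i) (G i)) : Lead (∏ i ∈ s, F i) (∑ i ∈ s, G i) := by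
  classical
  induction s using Finset.induction_on with
  | empty => simpa using lead_one
  | insert _ _ hnot ih =>
    rename_i a s'
    rw [Finset.prod_insert hnot, Finset.sum_insert hnot]
    exact lead_mul (h _ (Finset.mem_insert_self _ _))
      (ih fun i hi => h i (Finset.mem_insert_of_mem hi))

lemma lead_monomial (α : σB n →₀ ℕ) : Lead (monomial α (1:ℂ)) α := by
  constructor
  · classical rw [coeff_monomial]; simp
  · intro β hβ
    rw [support_monomial] at hβ
    simp only [one_ne_zero, if_false, Finset.mem_singleton] at hβ
    subst hβ; exact le_rfl

/-- leading exponent of a chord variable -/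
noncomputable def lw {n : ℕ} (p : PIdx n) : σB n →₀ ℕ :=
  Finsupp.single (toLex ((p.val.1 : Fin n), (0 : Fin 2))) 1 +
    Finsupp.single (toLex ((p.val.2 : Fin n), (1 : Fin 2))) 1

lemma pair_ne_of_fst {a b : Fin n} {s t : Fin 2} (h : a ≠ b) :
    (toLex (a, s) : σB n) ≠ toLex (b, t) := fun hh => h (congrArg (fun z => (ofLex z).1) hh)

lemma pair_ne_of_snd {a b : Fin n} {s t : Fin 2} (h : s ≠ t) :
    (toLex (a, s) : σB n) ≠ toLex (b, t) := fun hh => h (congrArg (fun z => (ofLex z).2) hh)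

lemma lead_fvar (c : ℕ) (p : PIdx n) : Lead (fvar c n (Sum.inl p)) (lw p) := by
  have hij : p.val.1 < p.val.2 := p.prop
  have hij' : p.val.1 ≠ p.val.2 := ne_of_lt hij
  have hXX : (X (toLex ((p.val.1 : Fin n), (0:Fin 2))) * X (toLex ((p.val.2 : Fin n), (1:Fin 2)))
      : MvPolynomial (σB n) ℂ) = monomial (lw p) 1 := by
    rw [X, X, monomial_mul, one_mul, lw]
  have hBA : (toLex (Finsupp.single (toLex ((p.val.2 : Fin n), (0:Fin 2))) 1 +
      Finsupp.single (toLex ((p.val.1 : Fin n), (1:Fin 2))) 1) : Lex (σB n →₀ ℕ))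
        < toLex (lw p) := by
    apply (fun (a b : Lex (σB n →₀ ℕ)) (i : σB n) (h1 : ∀ j < i, ofLex a j = ofLex b j)
        (h2 : ofLex a i < ofLex b i) => (⟨i, h1, h2⟩ : a < b)) _ _ (toLex ((p.val.1 : Fin n), (0:Fin 2)))
    · intro z hz
      -- z has first coordinate < p.val.1, so all four singles vanish
      have hz' : (ofLex z).1 < p.val.1 := by
        rcases (Prod.Lex.lt_iff (x := z) (y := toLex (p.val.1, 0))).mp hz with h | ⟨h1, h2⟩
        · exact h
        · exact absurd h2 (by simp)
      have e1 : z ≠ toLex ((p.val.2 : Fin n), (0:Fin 2)) := by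
        intro h; rw [h] at hz'; exact absurd hz' (by simp; omega)
      have e2 : z ≠ toLex ((p.val.1 : Fin n), (1:Fin 2)) := by
        intro h; rw [h] at hz'; exact absurd hz' (by simp)
      have e3 : z ≠ toLex ((p.val.1 : Fin n), (0:Fin 2)) := by
        intro h; rw [h] at hz'; exact absurd hz' (by simp)
      have e4 : z ≠ toLex ((p.val.2 : Fin n), (1:Fin 2)) := by
        intro h; rw [h] at hz'; exact absurd hz' (by simp; omega)
      simp only [ofLex_toLex, lw]
      simp only [Finsupp.add_apply, Finsupp.single_apply]
      rw [if_neg (fun h => e1 h.symm), if_neg (fun h => e2 h.symm),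
        if_neg (fun h => e3 h.symm), if_neg (fun h => e4 h.symm)]
    · simp only [ofLex_toLex, lw]
      simp only [Finsupp.add_apply, Finsupp.single_apply]
      rw [if_pos trivial, if_neg (pair_ne_of_snd (by decide : (1:Fin 2) ≠ 0))]
      norm_num
      exact fun h => hij' h.symm
  show Lead (X (toLex (p.val.1, 0)) * X (toLex (p.val.2, 1)) -
      (if p.val.1.val < c ∧ c ≤ p.val.2.val then 0
        else X (toLex (p.val.2, 0)) * X (toLex (p.val.1, 1)))) (lw p)
  split_ifs with hc
  · rw [sub_zero, hXX]
    exact lead_monomial _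
  · have hYY : (X (toLex ((p.val.2 : Fin n), (0:Fin 2))) * X (toLex ((p.val.1 : Fin n), (1:Fin 2)))
        : MvPolynomial (σB n) ℂ) =
        monomial (Finsupp.single (toLex ((p.val.2 : Fin n), (0:Fin 2))) 1 +
          Finsupp.single (toLex ((p.val.1 : Fin n), (1:Fin 2))) 1) 1 := by
      rw [X, X, monomial_mul, one_mul]
    rw [hXX, hYY]
    constructor
    · classical
      rw [coeff_sub, coeff_monomial, coeff_monomial, if_pos rfl,
        if_neg (fun h => absurd (congrArg toLex h) (ne_of_lt hBA))]
      norm_num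
    · intro β hβ
      classical
      have := MvPolynomial.support_sub _ _ _ hβ
      rw [Finset.mem_union, support_monomial, support_monomial] at this
      simp only [one_ne_zero, if_false, Finset.mem_singleton] at this
      rcases this with rfl | rfl
      · exact le_rfl
      · exact le_of_lt hBA





noncomputable def lwI {n : ℕ} : Idx n → (σB n →₀ ℕ) := Sum.elim lw (fun _ => 0)

noncomputable def Lmon {n : ℕ} (m : Idx n →₀ ℕ) : σB n →₀ ℕ := m.sum fun q k => k • lwI q

lemma lw_left (p : PIdx n) (t : Fin n) :
    lw p (toLex (t, (0 : Fin 2))) = if p.val.1 = t then 1 else 0 := by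
  rw [lw, Finsupp.add_apply, Finsupp.single_apply, Finsupp.single_apply,
    if_neg (pair_ne_of_snd (by decide : (1 : Fin 2) ≠ 0)), add_zero]
  by_cases h : p.val.1 = t
  · rw [if_pos h, if_pos (by rw [h])]
  · rw [if_neg h, if_neg (pair_ne_of_fst h)]

lemma lw_right (p : PIdx n) (t : Fin n) :
    lw p (toLex (t, (1 : Fin 2))) = if p.val.2 = t then 1 else 0 := by
  rw [lw, Finsupp.add_apply, Finsupp.single_apply, Finsupp.single_apply,
    if_neg (pair_ne_of_snd (by decide : (0 : Fin 2) ≠ 1)), zero_add]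
  by_cases h : p.val.2 = t
  · rw [if_pos h, if_pos (by rw [h])]
  · rw [if_neg h, if_neg (pair_ne_of_fst h)]

lemma Lmon_apply (m : Idx n →₀ ℕ) (z : σB n) :
    Lmon m z = ∑ q ∈ m.support, m q * lwI q z := by
  rw [Lmon, Finsupp.sum_apply, Finsupp.sum]
  apply Finset.sum_congr rfl
  intro q hq
  rw [Finsupp.smul_apply, smul_eq_mul]

lemma mem_support_left {m : Idx n →₀ ℕ} {p : PIdx n} (hp : Sum.inl p ∈ m.support) :
    Lmon m (toLex ((p.val.1 : Fin n), (0 : Fin 2))) ≠ 0 := by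
  rw [Lmon_apply]
  intro h
  rw [Finset.sum_eq_zero_iff] at h
  have := h _ hp
  rw [show lwI (Sum.inl p) = lw p from rfl, lw_left, if_pos rfl, mul_one] at this
  exact Finsupp.mem_support_iff.mp hp this

lemma mem_support_right {m : Idx n →₀ ℕ} {p : PIdx n} (hp : Sum.inl p ∈ m.support) :
    Lmon m (toLex ((p.val.2 : Fin n), (1 : Fin 2))) ≠ 0 := by
  rw [Lmon_apply]
  intro h
  rw [Finset.sum_eq_zero_iff] at h
  have := h _ hp
  rw [show lwI (Sum.inl p) = lw p from rfl, lw_right, if_pos rfl, mul_one] at this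
  exact Finsupp.mem_support_iff.mp hp this

lemma left_nonzero_exists {m : Idx n →₀ ℕ} {t : Fin n}
    (h : Lmon m (toLex (t, (0 : Fin 2))) ≠ 0) :
    ∃ p : PIdx n, Sum.inl p ∈ m.support ∧ p.val.1 = t := by
  rw [Lmon_apply] at h
  obtain ⟨q, hq, hne⟩ := Finset.exists_ne_zero_of_sum_ne_zero h
  cases q with
  | inl p =>
    refine ⟨p, hq, ?_⟩
    rw [show lwI (Sum.inl p) = lw p from rfl, lw_left] at hne
    by_contra hc
    rw [if_neg hc, mul_zero] at hne
    exact hne rfl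
  | inr u =>
    exfalso
    rw [show lwI (Sum.inr u) = 0 from rfl] at hne
    simp at hne

lemma right_nonzero_exists {m : Idx n →₀ ℕ} {t : Fin n}
    (h : Lmon m (toLex (t, (1 : Fin 2))) ≠ 0) :
    ∃ p : PIdx n, Sum.inl p ∈ m.support ∧ p.val.2 = t := by
  rw [Lmon_apply] at h
  obtain ⟨q, hq, hne⟩ := Finset.exists_ne_zero_of_sum_ne_zero h
  cases q with
  | inl p =>
    refine ⟨p, hq, ?_⟩
    rw [show lwI (Sum.inl p) = lw p from rfl, lw_right] at hne
    by_contra hc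
    rw [if_neg hc, mul_zero] at hne
    exact hne rfl
  | inr u =>
    exfalso
    rw [show lwI (Sum.inr u) = 0 from rfl] at hne
    simp at hne

lemma chord_mem (m : Idx n →₀ ℕ) (hstd : Std m) (a b : Fin n) (hab : a < b)
    (ha : Lmon m (toLex (a, (0 : Fin 2))) ≠ 0) (hb : Lmon m (toLex (b, (1 : Fin 2))) ≠ 0)
    (hamin : ∀ t : Fin n, Lmon m (toLex (t, (0 : Fin 2))) ≠ 0 → a ≤ t)
    (hbmin : ∀ t : Fin n, Lmon m (toLex (t, (1 : Fin 2))) ≠ 0 → b ≤ t) :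
    Sum.inl (⟨(a, b), hab⟩ : PIdx n) ∈ m.support := by
  obtain ⟨p0, hp0, hp0l⟩ := left_nonzero_exists ha
  obtain ⟨q0, hq0, hq0r⟩ := right_nonzero_exists hb
  rcases eq_or_ne p0.val.2 b with he | hne
  · have : (⟨(a, b), hab⟩ : PIdx n) = p0 :=
      Subtype.ext (Prod.ext hp0l.symm he.symm)
    rw [this]; exact hp0
  · rcases eq_or_ne q0.val.1 a with he2 | hne2
    · have : (⟨(a, b), hab⟩ : PIdx n) = q0 :=
        Subtype.ext (Prod.ext he2.symm hq0r.symm)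
      rw [this]; exact hq0
    · exfalso
      have h1 : a < q0.val.1 :=
        lt_of_le_of_ne (hamin _ (mem_support_left hq0)) (Ne.symm hne2)
      have h2 : b < p0.val.2 :=
        lt_of_le_of_ne (hbmin _ (mem_support_right hp0)) (Ne.symm hne)
      exact hstd.2 p0 q0 hp0 hq0 ⟨hp0l ▸ h1, hq0r ▸ h2⟩

lemma lmon_add (m₁ m₂ : Idx n →₀ ℕ) : Lmon (m₁ + m₂) = Lmon m₁ + Lmon m₂ := by
  unfold Lmon
  exact Finsupp.sum_add_index' (fun a => by simp) (fun a k₁ k₂ => add_smul k₁ k₂ (lwI a))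

lemma lmon_single (q : Idx n) (k : ℕ) : Lmon (Finsupp.single q k) = k • lwI q := by
  unfold Lmon
  exact Finsupp.sum_single_index (by simp)

noncomputable def deg {n : ℕ} (m : Idx n →₀ ℕ) : ℕ := m.sum fun _ k => k

lemma deg_add (m₁ m₂ : Idx n →₀ ℕ) : deg (m₁ + m₂) = deg m₁ + deg m₂ := by
  unfold deg
  exact Finsupp.sum_add_index' (fun a => rfl) (fun a k₁ k₂ => rfl)

lemma deg_single (q : Idx n) (k : ℕ) : deg (Finsupp.single q k) = k := by
  unfold deg
  exact Finsupp.sum_single_index rfl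

lemma deg_zero_iff (m : Idx n →₀ ℕ) : deg m = 0 ↔ m = 0 := by
  constructor
  · intro h
    unfold deg at h
    rw [Finsupp.sum, Finset.sum_eq_zero_iff] at h
    ext q
    by_cases hq : q ∈ m.support
    · exact h q hq
    · exact Finsupp.notMem_support_iff.mp hq
  · intro h; subst h; unfold deg; simp

lemma deg_eq_sum_left (m : Idx n →₀ ℕ) (h0 : m (Sum.inr ()) = 0) :
    deg m = ∑ t : Fin n, Lmon m (toLex (t, (0 : Fin 2))) := by
  have : ∀ t : Fin n, Lmon m (toLex (t, (0:Fin 2))) = ∑ q ∈ m.support, m q * lwI q (toLex (t, (0:Fin 2))) :=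
    fun t => Lmon_apply m _
  rw [Finset.sum_congr rfl fun t _ => this t, Finset.sum_comm]
  unfold deg
  rw [Finsupp.sum]
  apply Finset.sum_congr rfl
  intro q hq
  cases q with
  | inl p =>
    have : ∀ t : Fin n, m (Sum.inl p) * lwI (Sum.inl p) (toLex (t, (0:Fin 2)))
        = if p.val.1 = t then m (Sum.inl p) else 0 := by
      intro t
      rw [show lwI (Sum.inl p) = lw p from rfl, lw_left]
      by_cases h : p.val.1 = t
      · rw [if_pos h, if_pos h, mul_one]
      · rw [if_neg h, if_neg h, mul_zero]
    rw [Finset.sum_congr rfl fun t _ => this t, Finset.sum_ite_eq]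
    rw [if_pos (Finset.mem_univ _)]
  | inr u =>
    exfalso
    cases u
    exact Finsupp.mem_support_iff.mp hq h0

lemma support_sub_subset (m : Idx n →₀ ℕ) (s : Idx n →₀ ℕ) :
    (m - s).support ⊆ m.support := by
  intro x hx
  rw [Finsupp.mem_support_iff] at hx ⊢
  rw [Finsupp.tsub_apply] at hx
  omega

lemma lmon_inj : ∀ (D : ℕ) (m m' : Idx n →₀ ℕ), deg m ≤ D → Std m → Std m' →
    Lmon m = Lmon m' → m = m' := by
  intro D
  induction D with
  | zero =>
    intro m m' hD hstd hstd' hL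
    have hd0 : deg m = 0 := Nat.le_zero.mp hD
    have hd0' : deg m' = 0 := by
      rw [deg_eq_sum_left m' hstd'.1, ← hL, ← deg_eq_sum_left m hstd.1]
      exact hd0
    rw [(deg_zero_iff m).mp hd0, (deg_zero_iff m').mp hd0']
  | succ D IH =>
    intro m m' hD hstd hstd' hL
    by_cases hd0 : deg m = 0
    · have hd0' : deg m' = 0 := by
        rw [deg_eq_sum_left m' hstd'.1, ← hL, ← deg_eq_sum_left m hstd.1]
        exact hd0
      rw [(deg_zero_iff m).mp hd0, (deg_zero_iff m').mp hd0']
    · -- support is nonempty; find the minimal chord (a, b)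
      have hsupp : m.support.Nonempty := by
        rw [Finsupp.support_nonempty_iff]
        intro h; exact hd0 ((deg_zero_iff m).mpr h)
      obtain ⟨q1, hq1⟩ := hsupp
      have hq1l : ∃ p : PIdx n, Sum.inl p ∈ m.support := by
        cases q1 with
        | inl p => exact ⟨p, hq1⟩
        | inr u => exact absurd (Finsupp.mem_support_iff.mp hq1) (by cases u; simp [hstd.1])
      obtain ⟨p1, hp1⟩ := hq1l
      classical
      set Lset : Finset (Fin n) :=
        Finset.univ.filter (fun t => Lmon m (toLex (t, (0:Fin 2))) ≠ 0) with hLset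
      set Rset : Finset (Fin n) :=
        Finset.univ.filter (fun t => Lmon m (toLex (t, (1:Fin 2))) ≠ 0) with hRset
      have hLne : Lset.Nonempty :=
        ⟨p1.val.1, Finset.mem_filter.mpr ⟨Finset.mem_univ _, mem_support_left hp1⟩⟩
      have hRne : Rset.Nonempty :=
        ⟨p1.val.2, Finset.mem_filter.mpr ⟨Finset.mem_univ _, mem_support_right hp1⟩⟩
      set a := Lset.min' hLne with haa
      set b := Rset.min' hRne with hbb
      have ha : Lmon m (toLex (a, (0:Fin 2))) ≠ 0 :=
        (Finset.mem_filter.mp (Lset.min'_mem hLne)).2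
      have hb : Lmon m (toLex (b, (1:Fin 2))) ≠ 0 :=
        (Finset.mem_filter.mp (Rset.min'_mem hRne)).2
      have hamin : ∀ t : Fin n, Lmon m (toLex (t, (0:Fin 2))) ≠ 0 → a ≤ t := fun t ht =>
        Lset.min'_le t (Finset.mem_filter.mpr ⟨Finset.mem_univ _, ht⟩)
      have hbmin : ∀ t : Fin n, Lmon m (toLex (t, (1:Fin 2))) ≠ 0 → b ≤ t := fun t ht =>
        Rset.min'_le t (Finset.mem_filter.mpr ⟨Finset.mem_univ _, ht⟩)
      have hab : a < b := by
        obtain ⟨q0, hq0, hq0r⟩ := right_nonzero_exists hb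
        have := hamin _ (mem_support_left hq0)
        exact lt_of_le_of_lt this (hq0r ▸ q0.prop)
      have hch : Sum.inl (⟨(a, b), hab⟩ : PIdx n) ∈ m.support :=
        chord_mem m hstd a b hab ha hb hamin hbmin
      have hch' : Sum.inl (⟨(a, b), hab⟩ : PIdx n) ∈ m'.support := by
        apply chord_mem m' hstd' a b hab (by rw [← hL]; exact ha) (by rw [← hL]; exact hb)
        · intro t ht; exact hamin t (by rw [hL]; exact ht)
        · intro t ht; exact hbmin t (by rw [hL]; exact ht)
      set ch : Idx n := Sum.inl (⟨(a, b), hab⟩ : PIdx n) with hchdef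
      set m₀ := m - Finsupp.single ch 1 with hm₀
      set m₀' := m' - Finsupp.single ch 1 with hm₀'
      have hdec : m = Finsupp.single ch 1 + m₀ :=
        sub_decomp_one m ch (Nat.one_le_iff_ne_zero.mpr (Finsupp.mem_support_iff.mp hch))
      have hdec' : m' = Finsupp.single ch 1 + m₀' :=
        sub_decomp_one m' ch (Nat.one_le_iff_ne_zero.mpr (Finsupp.mem_support_iff.mp hch'))
      have hstd₀ : Std m₀ := by
        constructor
        · rw [hm₀, Finsupp.tsub_apply, hstd.1]; omega
        · intro p q hp hq
          exact hstd.2 p q (support_sub_subset m _ hp) (support_sub_subset m _ hq)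
      have hstd₀' : Std m₀' := by
        constructor
        · rw [hm₀', Finsupp.tsub_apply, hstd'.1]; omega
        · intro p q hp hq
          exact hstd'.2 p q (support_sub_subset m' _ hp) (support_sub_subset m' _ hq)
      have hLm : Lmon m₀ = Lmon m₀' := by
        have e1 : Lmon m = 1 • lwI ch + Lmon m₀ := by
          conv_lhs => rw [hdec]
          rw [lmon_add, lmon_single]
        have e2 : Lmon m' = 1 • lwI ch + Lmon m₀' := by
          conv_lhs => rw [hdec']
          rw [lmon_add, lmon_single]
        rw [e1, e2] at hL
        exact add_left_cancel hL
      have hdm : deg m₀ ≤ D := by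
        have : deg m = 1 + deg m₀ := by
          conv_lhs => rw [hdec]
          rw [deg_add, deg_single]
        omega
      have := IH m₀ m₀' hdm hstd₀ hstd₀' hLm
      rw [hdec, hdec', this]




lemma lead_phi (c : ℕ) (m : Idx n →₀ ℕ) (hstd : Std m) :
    Lead (aeval (fvar c n) (monomial m (1:ℂ))) (Lmon m) := by
  rw [aeval_monomial, map_one, one_mul]
  have h1 : Lmon m = ∑ q ∈ m.support, m q • lwI q := rfl
  rw [Finsupp.prod, h1]
  apply lead_prod
  intro q hq
  cases q with
  | inl p => exact lead_pow (lead_fvar c p) _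
  | inr u => cases u; exact absurd hstd.1 (Finsupp.mem_support_iff.mp hq)

/-- index type for standard monomials -/
def StdIdx (n : ℕ) := {m : Idx n →₀ ℕ // Std m}

noncomputable def v {n : ℕ} (i : StdIdx n) : MvPolynomial (Idx n) ℂ := monomial i.1 1

lemma key_indep (c : ℕ) : ∀ (s : Finset (StdIdx n)) (g : StdIdx n → ℂ),
    (∑ i ∈ s, g i • aeval (fvar c n) (v i)) = 0 → ∀ i ∈ s, g i = 0 := by
  classical
  intro s
  induction s using Finset.strongInduction with
  | _ s IH =>
    intro g hsum i hi
    have hne : s.Nonempty := ⟨i, hi⟩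
    obtain ⟨i₀, hi₀, hmax⟩ := Finset.exists_max_image s
      (fun i => (toLex (Lmon i.1) : Lex (σB n →₀ ℕ))) hne
    have hg0 : g i₀ = 0 := by
      have h := congrArg (coeff (Lmon i₀.1)) hsum
      rw [coeff_sum, coeff_zero] at h
      rw [Finset.sum_eq_single i₀] at h
      · rw [coeff_smul, show coeff (Lmon i₀.1) (aeval (fvar c n) (v i₀)) = 1 from
          (lead_phi c i₀.1 i₀.2).1, smul_eq_mul, mul_one] at h
        exact h
      · intro j hj hji
        rw [coeff_smul]
        have hz : coeff (Lmon i₀.1) (aeval (fvar c n) (v j)) = 0 := by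
          by_contra hc
          have h1 := (lead_phi c j.1 j.2).2 _ (mem_support_iff.mpr hc)
          have h2 := hmax j hj
          have h3 : (toLex (Lmon j.1) : Lex (σB n →₀ ℕ)) = toLex (Lmon i₀.1) :=
            le_antisymm h2 h1
          have h4 : Lmon j.1 = Lmon i₀.1 := toLex.injective h3
          have h5 : j.1 = i₀.1 := lmon_inj (deg j.1) j.1 i₀.1 le_rfl j.2 i₀.2 h4
          exact hji (Subtype.ext h5)
        rw [hz, smul_zero]
      · intro h'; exact absurd hi₀ h'
    rcases eq_or_ne i i₀ with rfl | hne'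
    · exact hg0
    · apply IH (s.erase i₀) (Finset.erase_ssubset hi₀) g _ i (Finset.mem_erase.mpr ⟨hne', hi⟩)
      rw [← Finset.add_sum_erase s _ hi₀, hg0, zero_smul, zero_add] at hsum
      exact hsum

lemma std_set_eq : {x : MvPolynomial (Idx n) ℂ | ∃ m, Std m ∧ x = monomial m 1}
    = Set.range (v (n := n)) := by
  ext x
  constructor
  · rintro ⟨m, hm, rfl⟩; exact ⟨⟨m, hm⟩, rfl⟩
  · rintro ⟨⟨m, hm⟩, rfl⟩; exact ⟨m, hm, rfl⟩

lemma std_zero (c : ℕ) {y : MvPolynomial (Idx n) ℂ}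
    (hy : y ∈ Submodule.span ℂ {x | ∃ m, Std m ∧ x = monomial m (1:ℂ)})
    (h0 : aeval (fvar c n) y = 0) : y = 0 := by
  rw [std_set_eq] at hy
  rw [Finsupp.mem_span_range_iff_exists_finsupp] at hy
  obtain ⟨cc, hcc⟩ := hy
  have hmap : (cc.sum fun i a => a • aeval (fvar c n) (v i)) = 0 := by
    rw [← h0, ← hcc, map_finsuppSum]
    apply Finsupp.sum_congr
    intro i _
    rw [map_smul]
  have hz : ∀ i ∈ cc.support, cc i = 0 :=
    key_indep c cc.support (fun i => cc i) hmap
  have : cc = 0 := by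
    ext i
    by_cases h : i ∈ cc.support
    · exact hz i h
    · exact Finsupp.notMem_support_iff.mp h
  rw [← hcc, this]
  simp

end Lead

lemma ker_phi_sub (c n : ℕ) : ∀ f : MvPolynomial (Idx n) ℂ,
    aeval (fvar c n) f = 0 → f ∈ Ideal.span (JGens c n) := by
  intro f hf
  have hV := top_le_V c n f
  rw [V, Submodule.mem_sup] at hV
  obtain ⟨y, hy, z, hz, hyz⟩ := hV
  have hz' : z ∈ Ideal.span (JGens c n) := hz
  have hz0 : aeval (fvar c n) z = 0 := by
    have hk : Ideal.span (JGens c n) ≤ RingHom.ker ((aeval (fvar c n) : MvPolynomial (Idx n) ℂ →ₐ[ℂ]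
        MvPolynomial (σB n) ℂ) : MvPolynomial (Idx n) ℂ →+* MvPolynomial (σB n) ℂ) := by
      rw [Ideal.span_le]
      intro g hg
      exact phi_JGens c n g hg
    exact hk hz'
  have hy0 : aeval (fvar c n) y = 0 := by
    have h2 : aeval (fvar c n) y + aeval (fvar c n) z = 0 := by
      rw [← map_add, hyz]; exact hf
    rwa [hz0, add_zero] at h2
  have hy00 : y = 0 := std_zero c hy hy0
  rw [← hyz, hy00, zero_add]
  exact hz'

lemma span_le_ker (c n : ℕ) :
    Ideal.span (JGens c n) ≤ RingHom.ker ((aeval (fvar c n) : MvPolynomial (Idx n) ℂ →ₐ[ℂ]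
      MvPolynomial (σB n) ℂ) : MvPolynomial (Idx n) ℂ →+* MvPolynomial (σB n) ℂ) := by
  rw [Ideal.span_le]
  intro g hg
  exact phi_JGens c n g hg

noncomputable def liftPhi (c n : ℕ) :
    (MvPolynomial (Idx n) ℂ ⧸ Ideal.span (JGens c n)) →+* MvPolynomial (σB n) ℂ :=
  Ideal.Quotient.lift _ ((aeval (fvar c n) : MvPolynomial (Idx n) ℂ →ₐ[ℂ]
    MvPolynomial (σB n) ℂ) : MvPolynomial (Idx n) ℂ →+* MvPolynomial (σB n) ℂ)
    (fun a ha => span_le_ker c n ha)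

lemma domainJ (c n : ℕ) : IsDomain (MvPolynomial (Idx n) ℂ ⧸ Ideal.span (JGens c n)) := by
  have hinj : Function.Injective (liftPhi c n) := by
    rw [injective_iff_map_eq_zero]
    intro a ha
    obtain ⟨x, rfl⟩ := Ideal.Quotient.mk_surjective a
    rw [show liftPhi c n (Ideal.Quotient.mk _ x) = aeval (fvar c n) x from rfl] at ha
    rw [Ideal.Quotient.eq_zero_iff_mem]
    exact ker_phi_sub c n x ha
  exact hinj.isDomain (liftPhi c n)

lemma span_eq_sup (c n : ℕ) :
    Ideal.span (JGens c n) = Ideal.span (IGens c n) ⊔ Ideal.span {(Tinf : MvPolynomial (Idx n) ℂ)} := by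
  apply le_antisymm
  · rw [Ideal.span_le]
    rintro g hg
    rcases hg with rfl | ⟨i, j, k, l, hij, hjk, hkl, h⟩
    · exact Ideal.mem_sup_right (Ideal.subset_span rfl)
    · rcases h with ⟨hcond, rfl⟩ | ⟨hcond, rfl⟩
      · have hI : (Tinf * W i j hij * W k l hkl
            - W i k (hij.trans hjk) * W j l (hjk.trans hkl)
            + W i l (hij.trans (hjk.trans hkl)) * W j k hjk) ∈ Ideal.span (IGens c n) :=
          Ideal.subset_span ⟨i, j, k, l, hij, hjk, hkl, Or.inl ⟨hcond, rfl⟩⟩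
        have hT : Tinf * (W i j hij * W k l hkl) ∈
            Ideal.span {(Tinf : MvPolynomial (Idx n) ℂ)} :=
          Ideal.mul_mem_right _ _ (Ideal.subset_span rfl)
        have he : (- W i k (hij.trans hjk) * W j l (hjk.trans hkl)
            + W i l (hij.trans (hjk.trans hkl)) * W j k hjk : MvPolynomial (Idx n) ℂ)
            = (Tinf * W i j hij * W k l hkl
              - W i k (hij.trans hjk) * W j l (hjk.trans hkl)
              + W i l (hij.trans (hjk.trans hkl)) * W j k hjk)
              - Tinf * (W i j hij * W k l hkl) := by ring
        rw [he]
        exact Submodule.sub_mem _ (Ideal.mem_sup_left hI) (Ideal.mem_sup_right hT)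
      · exact Ideal.mem_sup_left
          (Ideal.subset_span ⟨i, j, k, l, hij, hjk, hkl, Or.inr ⟨hcond, rfl⟩⟩)
  · apply sup_le
    · rw [Ideal.span_le]
      rintro g ⟨i, j, k, l, hij, hjk, hkl, h⟩
      rcases h with ⟨hcond, rfl⟩ | ⟨hcond, rfl⟩
      · have hbin : (- W i k (hij.trans hjk) * W j l (hjk.trans hkl)
            + W i l (hij.trans (hjk.trans hkl)) * W j k hjk) ∈ Ideal.span (JGens c n) :=
          Ideal.subset_span (Set.mem_insert_iff.mpr
            (Or.inr ⟨i, j, k, l, hij, hjk, hkl, Or.inl ⟨hcond, rfl⟩⟩))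
        have hT : Tinf * (W i j hij * W k l hkl) ∈ Ideal.span (JGens c n) :=
          Ideal.mul_mem_right _ _ (Ideal.subset_span (Set.mem_insert _ _))
        have he : (Tinf * W i j hij * W k l hkl
            - W i k (hij.trans hjk) * W j l (hjk.trans hkl)
            + W i l (hij.trans (hjk.trans hkl)) * W j k hjk : MvPolynomial (Idx n) ℂ)
            = (- W i k (hij.trans hjk) * W j l (hjk.trans hkl)
              + W i l (hij.trans (hjk.trans hkl)) * W j k hjk)
              + Tinf * (W i j hij * W k l hkl) := by ring
        rw [he]
        exact Submodule.add_mem _ hbin hT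
      · exact Ideal.subset_span (Set.mem_insert_iff.mpr
          (Or.inr ⟨i, j, k, l, hij, hjk, hkl, Or.inr ⟨hcond, rfl⟩⟩))
    · rw [Ideal.span_le, Set.singleton_subset_iff]
      exact Ideal.subset_span (Set.mem_insert _ _)

noncomputable def χ (c n : ℕ) : MvPolynomial (Idx n) ℂ →ₐ[ℂ] ℂ :=
  aeval (Sum.elim (fun p : PIdx n => (p.val.2.val : ℂ) - (p.val.1.val : ℂ)) (fun _ => 1))

lemma chi_IGens (c n : ℕ) : ∀ g ∈ IGens c n, χ c n g = 0 := by
  rintro g ⟨i, j, k, l, hij, hjk, hkl, h⟩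
  rcases h with ⟨hcond, rfl⟩ | ⟨hcond, rfl⟩ <;>
  · simp only [χ, W, Tinf, map_add, map_sub, map_mul, aeval_X, Sum.elim_inl, Sum.elim_inr]
    ring

lemma tinf_not_mem (c n : ℕ) : (Tinf : MvPolynomial (Idx n) ℂ) ∉ Ideal.span (IGens c n) := by
  intro h
  have hker : Ideal.span (IGens c n) ≤ RingHom.ker ((χ c n : MvPolynomial (Idx n) ℂ →ₐ[ℂ] ℂ) :
      MvPolynomial (Idx n) ℂ →+* ℂ) := by
    rw [Ideal.span_le]
    intro g hg
    exact chi_IGens c n g hg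
  have h1 : χ c n Tinf = 0 := hker h
  rw [show χ c n Tinf = 1 by simp [χ, Tinf]] at h1
  exact one_ne_zero h1

private theorem stmt_12' (c d : ℕ) (hc : 2 < c) (hd : 2 < d) :
    Prime (Ideal.Quotient.mk (Ideal.span (IGens c (c + d))) Tinf) ∧
    IsDomain (MvPolynomial (Idx (c + d)) ℂ ⧸ Ideal.span (JGens c (c + d))) := by
  set n := c + d with hn
  have hdom := domainJ c n
  refine ⟨?_, hdom⟩
  have hne : (Ideal.Quotient.mk (Ideal.span (IGens c n)) Tinf) ≠ 0 := by
    rw [Ne, Ideal.Quotient.eq_zero_iff_mem]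
    exact tinf_not_mem c n
  rw [← Ideal.span_singleton_prime hne]
  have hmapspan : Ideal.span {Ideal.Quotient.mk (Ideal.span (IGens c n)) Tinf}
      = (Ideal.span {(Tinf : MvPolynomial (Idx n) ℂ)}).map
          (Ideal.Quotient.mk (Ideal.span (IGens c n))) := by
    rw [Ideal.map_span, Set.image_singleton]
  rw [hmapspan]
  rw [← Ideal.Quotient.isDomain_iff_prime]
  have e := (DoubleQuot.quotQuotEquivQuotSup (Ideal.span (IGens c n))
    (Ideal.span {(Tinf : MvPolynomial (Idx n) ℂ)})).trans
    (Ideal.quotEquivOfEq (span_eq_sup c n).symm)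
  exact e.injective.isDomain e.toRingHom

end StmtAux

/-- For `c, d > 2` and `n = c + d`, the class of `T_∞` is a prime element of
`R = ℂ[T_{ij}, T_∞]/I`; equivalently, `R/(T_∞) ≅ ℂ[T_{ij}, T_∞]/J` is an integral domain. -/
theorem stmt_12 (c d : ℕ) (hc : 2 < c) (hd : 2 < d) :
    Prime (Ideal.Quotient.mk (Ideal.span (IGens c (c + d))) Tinf) ∧
    IsDomain (MvPolynomial (Idx (c + d)) ℂ ⧸ Ideal.span (JGens c (c + d))) :=
  StmtAux.stmt_12' c d hc hd
end

section
/- Let c, d > 2 and n = c+d, and let V(I) ⊆ ℂ^{C(n,2)+1} be the zero set of the ideal I generated by T_∞T_{ij}T_{kl} − T_{ik}T_{jl} + T_{il}T_{jk} for i < j ≤ c < k < l and the Plücker trinomials for other quadruples. Then the open subset of V(I) where T_∞ ≠ 0 is isomorphic as a variety to X̄ × ℂ*, where X̄ is the affine cone over G(2,n), via x ↦ (π̄(x), x_∞), where π̄ multiplies the coordinates x_{ij} with i,j ≤ c by x_∞ and leaves the others unchanged. -/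
open MvPolynomial

/-- The affine cone `X̄` over `G(2,n)`: the common zero set of the Plücker relations
`y_{ij}y_{kl} - y_{ik}y_{jl} + y_{il}y_{jk}` in `ℂ^{C(n,2)}`. -/
def coneGrass (n : ℕ) : Set (PIdx n → ℂ) :=
  {y | ∀ (i j k l : Fin n) (hij : i < j) (hjk : j < k) (hkl : k < l),
    y ⟨(i, j), hij⟩ * y ⟨(k, l), hkl⟩ - y ⟨(i, k), hij.trans hjk⟩ * y ⟨(j, l), hjk.trans hkl⟩
      + y ⟨(i, l), hij.trans (hjk.trans hkl)⟩ * y ⟨(j, k), hjk⟩ = 0}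

/-- The zero set `V(I) ⊆ ℂ^{C(n,2)+1}` of the ideal `I`. -/
def VI (c n : ℕ) : Set (Idx n → ℂ) :=
  {x | ∀ P ∈ IGens c n, MvPolynomial.eval x P = 0}

/-- The open locus of `V(I)` where `T_∞ ≠ 0`. -/
def VIU (c n : ℕ) : Set (Idx n → ℂ) :=
  {x ∈ VI c n | x (Sum.inr ()) ≠ 0}

lemma fwd_mem (c n : ℕ) (x : Idx n → ℂ) (hx : x ∈ VIU c n) :
    (fun p : PIdx n => if p.val.2.val < c then x (Sum.inr ()) * x (Sum.inl p)
      else x (Sum.inl p)) ∈ coneGrass n := by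
  intro i j k l hij hjk hkl
  have hkl' : k.val < l.val := hkl
  have hjk' : j.val < k.val := hjk
  by_cases hjc : j.val < c
  · by_cases hkc : k.val < c
    · have h := hx.1 _ ⟨i, j, k, l, hij, hjk, hkl,
        Or.inr ⟨by omega, rfl⟩⟩
      simp only [Tinf, W, map_add, map_sub, map_mul, eval_X] at h
      by_cases hlc : l.val < c
      · simp only [hjc, hkc, hlc, if_true]
        linear_combination x (Sum.inr ()) * x (Sum.inr ()) * h
      · simp only [hjc, hkc, hlc, if_true, if_false]
        linear_combination x (Sum.inr ()) * h
    · have hlc : ¬ l.val < c := by omega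
      have h := hx.1 _ ⟨i, j, k, l, hij, hjk, hkl,
        Or.inl ⟨⟨hjc, by omega⟩, rfl⟩⟩
      simp only [Tinf, W, map_add, map_sub, map_mul, eval_X] at h
      simp only [hjc, hkc, hlc, if_true, if_false]
      linear_combination h
  · have hkc : ¬ k.val < c := by omega
    have hlc : ¬ l.val < c := by omega
    have h := hx.1 _ ⟨i, j, k, l, hij, hjk, hkl, Or.inr ⟨by omega, rfl⟩⟩
    simp only [Tinf, W, map_add, map_sub, map_mul, eval_X] at h
    simp only [hjc, hkc, hlc, if_false]
    linear_combination h

lemma inv_mem (c n : ℕ) (y : PIdx n → ℂ) (hy : y ∈ coneGrass n) (t : ℂ) (ht : t ≠ 0) :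
    (Sum.elim (fun p : PIdx n => if p.val.2.val < c then y p / t else y p)
      (fun _ => t) : Idx n → ℂ) ∈ VIU c n := by
  refine ⟨?_, ht⟩
  rintro P ⟨i, j, k, l, hij, hjk, hkl, ⟨⟨hjc, hck⟩, rfl⟩ | ⟨hns, rfl⟩⟩ <;>
    have h := hy i j k l hij hjk hkl <;>
    have hkl' : k.val < l.val := hkl <;>
    have hjk' : j.val < k.val := hjk <;>
    simp only [Tinf, W, map_add, map_sub, map_mul, eval_X, Sum.elim_inl, Sum.elim_inr]
  · have hkc : ¬ k.val < c := by omega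
    have hlc : ¬ l.val < c := by omega
    simp only [hjc, hkc, hlc, if_true, if_false]
    field_simp
    linear_combination h
  · by_cases hjc : j.val < c
    · have hkc : k.val < c := by omega
      by_cases hlc : l.val < c
      · simp only [hjc, hkc, hlc, if_true]
        field_simp
        linear_combination h
      · simp only [hjc, hkc, hlc, if_true, if_false]
        field_simp
        linear_combination h
    · have hkc : ¬ k.val < c := by omega
      have hlc : ¬ l.val < c := by omega
      simp only [hjc, hkc, hlc, if_false]
      linear_combination h

/-- For `c, d > 2` and `n = c + d`, the locus `{T_∞ ≠ 0}` of `V(I)` is isomorphic to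
`X̄ × ℂ*`, via `x ↦ (π̄(x), x_∞)`, where `π̄` multiplies the coordinates `x_{ij}` with
`i, j ≤ c` by `x_∞` and leaves the other coordinates unchanged. -/
theorem stmt_17 (c d : ℕ) (hc : 2 < c) (hd : 2 < d) :
    ∃ e : (VIU c (c + d)) ≃ (coneGrass (c + d)) × {t : ℂ // t ≠ 0},
      ∀ x : VIU c (c + d),
        ((e x).1 : PIdx (c + d) → ℂ) =
          (fun p => if p.val.2.val < c
            then x.val (Sum.inr ()) * x.val (Sum.inl p)
            else x.val (Sum.inl p)) ∧
        ((e x).2 : ℂ) = x.val (Sum.inr ()) := by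
  refine ⟨{
    toFun := fun x => ⟨⟨fun p => if p.val.2.val < c
        then x.val (Sum.inr ()) * x.val (Sum.inl p) else x.val (Sum.inl p),
        fwd_mem c (c + d) x.val x.2⟩, ⟨x.val (Sum.inr ()), x.2.2⟩⟩
    invFun := fun yt => ⟨Sum.elim (fun p : PIdx (c + d) =>
        if p.val.2.val < c then yt.1.val p / yt.2.val else yt.1.val p) (fun _ => yt.2.val),
        inv_mem c (c + d) yt.1.val yt.1.2 yt.2.val yt.2.2⟩
    left_inv := ?_
    right_inv := ?_ }, fun x => ⟨rfl, rfl⟩⟩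
  · rintro ⟨x, hx⟩
    have ht : x (Sum.inr ()) ≠ 0 := hx.2
    ext s
    rcases s with p | u
    · by_cases hp : p.val.2.val < c
      · simp only [Sum.elim_inl, hp, if_true, mul_div_cancel_left₀ _ ht]
      · simp only [Sum.elim_inl, hp, if_false]
    · cases u; simp
  · rintro ⟨⟨y, hy⟩, ⟨t, ht⟩⟩
    refine Prod.ext (Subtype.ext ?_) (Subtype.ext ?_)
    · ext p
      by_cases hp : p.val.2.val < c
      · simp only [Sum.elim_inl, Sum.elim_inr, hp, if_true, mul_div_cancel₀ _ ht]
      · simp only [Sum.elim_inl, hp, if_false]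
    · rfl
end
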